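/- arXiv:2108.03556 — 10 statements merged into one kernel-verified Lean document; each statement's English description precedes it below -/
import Mathlib

section
/- Let (g,[·,·],⟨·,·,·⟩) be a Lie-Yamaguti algebra over a field K of characteristic 0, V a K-vector space, ρ: g→End(V) a linear map and μ: g×g→End(V) a bilinear map, and set D(x,y):=μ(y,x)−μ(x,y)+ρ(x)ρ(y)−ρ(y)ρ(x)−ρ([x,y]). Then (V;ρ,μ) is a representation of g if and only if the brackets on the direct sum g⊕V defined by [x+u,y+v] := [x,y]+ρ(x)v−ρ(y)u and ⟨x+u,y+v,z+w⟩ := ⟨x,y,z⟩+D(x,y)w+μ(y,z)u−μ(x,z)v (for x,y,z in g and u,v,w in V) make g⊕V into a Lie-Yamaguti algebra (the semidirect product). -/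
/-- A map of two variables that is linear in each variable separately. -/
def IsBilin (K : Type*) {M N P : Type*} [Field K] [AddCommGroup M] [Module K M]
    [AddCommGroup N] [Module K N] [AddCommGroup P] [Module K P]
    (f : M → N → P) : Prop :=
  (∀ y, IsLinearMap K fun x => f x y) ∧ (∀ x, IsLinearMap K fun y => f x y)

/-- A map of three variables that is linear in each variable separately. -/
def IsTrilin (K : Type*) {M P : Type*} [Field K] [AddCommGroup M] [Module K M]
    [AddCommGroup P] [Module K P] (f : M → M → M → P) : Prop :=
  (∀ y z, IsLinearMap K fun x => f x y z) ∧
  (∀ x z, IsLinearMap K fun y => f x y z) ∧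
  (∀ x y, IsLinearMap K fun z => f x y z)

/-- A Lie-Yamaguti algebra structure: a bilinear skew-symmetric binary bracket `b` and a
trilinear ternary bracket `t`, skew-symmetric in its first two arguments, satisfying
(LY1)-(LY4). -/
def IsLieYamaguti (K : Type*) {g : Type*} [Field K] [CharZero K] [AddCommGroup g] [Module K g]
    (b : g → g → g) (t : g → g → g → g) : Prop :=
  IsBilin K b ∧ IsTrilin K t ∧
  (∀ x y, b x y = - b y x) ∧
  (∀ x y z, t x y z = - t y x z) ∧
  (∀ x y z, b (b x y) z + b (b y z) x + b (b z x) y + t x y z + t y z x + t z x y = 0) ∧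
  (∀ x y z w, t (b x y) z w + t (b y z) x w + t (b z x) y w = 0) ∧
  (∀ x y z w, t x y (b z w) = b (t x y z) w + b z (t x y w)) ∧
  (∀ x y z w u, t x y (t z w u) = t (t x y z) w u + t z (t x y w) u + t z w (t x y u))

/-- The operator `D(x,y) = μ(y,x) − μ(x,y) + ρ(x)ρ(y) − ρ(y)ρ(x) − ρ([x,y])`. -/
def LYD (K : Type*) {g V : Type*} [Field K] [CharZero K] [AddCommGroup g] [Module K g]
    [AddCommGroup V] [Module K V]
    (b : g → g → g) (ρ : g → Module.End K V) (μ : g → g → Module.End K V)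
    (x y : g) : Module.End K V :=
  μ y x - μ x y + ρ x * ρ y - ρ y * ρ x - ρ (b x y)

/-- A representation of a Lie-Yamaguti algebra `(g, b, t)` on `V`. -/
def IsLYRep (K : Type*) {g V : Type*} [Field K] [CharZero K] [AddCommGroup g] [Module K g]
    [AddCommGroup V] [Module K V]
    (b : g → g → g) (t : g → g → g → g)
    (ρ : g → Module.End K V) (μ : g → g → Module.End K V) : Prop :=
  IsLinearMap K ρ ∧ IsBilin K μ ∧
  (∀ x y z, μ (b x y) z - μ x z * ρ y + μ y z * ρ x = 0) ∧
  (∀ x y z, μ x (b y z) - ρ y * μ x z + ρ z * μ x y = 0) ∧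
  (∀ x y z, ρ (t x y z) = LYD K b ρ μ x y * ρ z - ρ z * LYD K b ρ μ x y) ∧
  (∀ x y z w, μ z w * μ x y - μ y w * μ x z - μ x (t y z w) + LYD K b ρ μ y z * μ x w = 0) ∧
  (∀ x y z w, μ (t x y z) w + μ z (t x y w) = LYD K b ρ μ x y * μ z w - μ z w * LYD K b ρ μ x y)

/-- A relative Rota-Baxter operator on a Lie-Yamaguti algebra `(g, b, t)` with respect to a
representation `(V; ρ, μ)`. -/
def IsRelRB (K : Type*) {g V : Type*} [Field K] [CharZero K] [AddCommGroup g] [Module K g]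
    [AddCommGroup V] [Module K V]
    (b : g → g → g) (t : g → g → g → g)
    (ρ : g → Module.End K V) (μ : g → g → Module.End K V) (T : V → g) : Prop :=
  IsLinearMap K T ∧
  (∀ u v, b (T u) (T v) = T (ρ (T u) v - ρ (T v) u)) ∧
  (∀ u v w, t (T u) (T v) (T w) =
    T (LYD K b ρ μ (T u) (T v) w + μ (T v) (T w) u - μ (T u) (T w) v))

/-- The commutator `[x,y]_C = x*y − y*x`. -/
def preC {A : Type*} [AddCommGroup A] (m : A → A → A) (x y : A) : A := m x y - m y x

/-- The associator `(x,y,z) = (x*y)*z − x*(y*z)`. -/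
def preAssoc {A : Type*} [AddCommGroup A] (m : A → A → A) (x y z : A) : A :=
  m (m x y) z - m x (m y z)

/-- `{x,y,z}_D = {z,y,x} − {z,x,y} + (y,x,z) − (x,y,z)`. -/
def preD {A : Type*} [AddCommGroup A] (m : A → A → A) (br : A → A → A → A) (x y z : A) : A :=
  br z y x - br z x y + preAssoc m y x z - preAssoc m x y z

/-- A pre-Lie-Yamaguti algebra structure on `A`. -/
def IsPreLY (K : Type*) {A : Type*} [Field K] [CharZero K] [AddCommGroup A] [Module K A]
    (m : A → A → A) (br : A → A → A → A) : Prop :=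
  IsBilin K m ∧ IsTrilin K br ∧
  (∀ x y z w, br z (preC m x y) w - br (m y z) x w + br (m x z) y w = 0) ∧
  (∀ x y z w, br x y (preC m z w) = m z (br x y w) - m w (br x y z)) ∧
  (∀ x y z w t, br (br x y z) w t - br (br x y w) z t - br x y (preD m br z w t)
      - br x y (br z w t) + br x y (br w z t) + preD m br z w (br x y t) = 0) ∧
  (∀ x y z w t, br z (preD m br x y w) t + br z (br x y w) t - br z (br y x w) t
      + br z w (preD m br x y t) + br z w (br x y t) - br z w (br y x t)
      = preD m br x y (br z w t) - br (preD m br x y z) w t) ∧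
  (∀ x y z w, m (preD m br x y z) w + m (br x y z) w - m (br y x z) w
      = preD m br x y (m z w) - m z (preD m br x y w))

/-- The ternary bracket `⟨x,y,z⟩_C = {x,y,z}_D + {x,y,z} − {y,x,z}` of the subadjacent
Lie-Yamaguti algebra of a pre-Lie-Yamaguti algebra. -/
def subT {A : Type*} [AddCommGroup A] (m : A → A → A) (br : A → A → A → A) (x y z : A) : A :=
  preD m br x y z + br x y z - br y x z

/-- A symplectic structure on a Lie-Yamaguti algebra `(g, b, t)`: a nondegenerate
skew-symmetric bilinear form satisfying the two cocycle conditions. -/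
def IsSymplectic (K : Type*) {g : Type*} [Field K] [CharZero K] [AddCommGroup g] [Module K g]
    (b : g → g → g) (t : g → g → g → g) (ω : g → g → K) : Prop :=
  IsBilin K ω ∧ (∀ x y, ω x y = - ω y x) ∧ (∀ x, (∀ y, ω x y = 0) → x = 0) ∧
  (∀ x y z, ω x (b y z) + ω y (b z x) + ω z (b x y) = 0) ∧
  (∀ x y z w, ω z (t x y w) - ω x (t w z y) + ω y (t w z x) - ω w (t x y z) = 0)

/-- The dual map `ρ*` defined by `(ρ*(x) α)(v) = −α(ρ(x) v)`. -/
def dualRho (K : Type*) {g V : Type*} [Field K] [CharZero K] [AddCommGroup g] [Module K g]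
    [AddCommGroup V] [Module K V] (ρ : g → Module.End K V) (x : g) :
    Module.End K (Module.Dual K V) := -(ρ x).dualMap

/-- The dual map `μ*` defined by `(μ*(x,y) α)(v) = −α(μ(x,y) v)`. -/
def dualMu (K : Type*) {g V : Type*} [Field K] [CharZero K] [AddCommGroup g] [Module K g]
    [AddCommGroup V] [Module K V] (μ : g → g → Module.End K V) (x y : g) :
    Module.End K (Module.Dual K V) := -(μ x y).dualMap

/-- Left multiplication `L_x` of a pre-Lie-Yamaguti algebra, as a linear endomorphism. -/
def Llin (K : Type*) {A : Type*} [Field K] [CharZero K] [AddCommGroup A] [Module K A]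
    (m : A → A → A) (hm : IsBilin K m) (x : A) : Module.End K A :=
  IsLinearMap.mk' (fun v => m x v) (hm.2 x)

/-- `𝓡(x,y) : z ↦ {z,x,y}` of a pre-Lie-Yamaguti algebra, as a linear endomorphism. -/
def Rlin (K : Type*) {A : Type*} [Field K] [CharZero K] [AddCommGroup A] [Module K A]
    (br : A → A → A → A) (hbr : IsTrilin K br) (x y : A) : Module.End K A :=
  IsLinearMap.mk' (fun v => br v x y) (hbr.1 x y)

/-- `𝓛(x,y) : z ↦ {x,y,z}_D` of a pre-Lie-Yamaguti algebra, as a linear endomorphism. -/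
def Dlin (K : Type*) {A : Type*} [Field K] [CharZero K] [AddCommGroup A] [Module K A]
    (m : A → A → A) (br : A → A → A → A) (hm : IsBilin K m) (hbr : IsTrilin K br)
    (x y : A) : Module.End K A :=
  Rlin K br hbr y x - Rlin K br hbr x y
    + (Llin K m hm (m y x) - Llin K m hm y * Llin K m hm x)
    - (Llin K m hm (m x y) - Llin K m hm x * Llin K m hm y)
section LYauxSect
variable {K g V : Type*} [Field K] [CharZero K] [AddCommGroup g] [Module K g]
  [AddCommGroup V] [Module K V]
  {b : g → g → g} {t : g → g → g → g} {ρ : g → Module.End K V} {μ : g → g → Module.End K V}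

-- Lemma A: D(b x y, z) + D(b y z, x) + D(b z x, y) = 0
theorem LYaux_lemA (h : IsLieYamaguti K b t) (hrep : IsLYRep K b t ρ μ) (x y z : g) :
    LYD K b ρ μ (b x y) z + LYD K b ρ μ (b y z) x + LYD K b ρ μ (b z x) y = 0 := by
  obtain ⟨hρ, hμ, R1, R2, R3, R4, R5⟩ := hrep
  have e1 : ∀ x y z : g, μ (b x y) z = μ x z * ρ y - μ y z * ρ x := fun x y z =>
    eq_of_sub_eq_zero (by rw [← R1 x y z]; abel)
  have e2 : ∀ x y z : g, μ z (b x y) = ρ x * μ z y - ρ y * μ z x := fun x y z =>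
    eq_of_sub_eq_zero (by rw [← R2 z x y]; abel)
  have E : ρ (b (b x y) z) = -(ρ (b (b y z) x) + ρ (b (b z x) y) + ρ (t x y z)
      + ρ (t y z x) + ρ (t z x y)) := by
    have := congrArg ρ (h.2.2.2.2.1 x y z)
    simp only [hρ.map_add, hρ.map_zero] at this
    apply eq_of_sub_eq_zero
    rw [← this]; abel
  simp only [LYD]
  rw [e1 x y z, e1 y z x, e1 z x y, e2 x y z, e2 y z x, e2 z x y, E,
    R3 x y z, R3 y z x, R3 z x y]
  simp only [LYD]
  noncomm_ring

-- Lemma B: [D(x,y), D(z,w)] = D(t x y z, w) + D(z, t x y w)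
theorem LYaux_lemB (h : IsLieYamaguti K b t) (hrep : IsLYRep K b t ρ μ) (x y z w : g) :
    LYD K b ρ μ x y * LYD K b ρ μ z w - LYD K b ρ μ z w * LYD K b ρ μ x y =
      LYD K b ρ μ (t x y z) w + LYD K b ρ μ z (t x y w) := by
  obtain ⟨hρ, hμ, R1, R2, R3, R4, R5⟩ := hrep
  have e4 : ∀ x y z w : g, μ x (t y z w) =
      μ z w * μ x y - μ y w * μ x z + LYD K b ρ μ y z * μ x w := fun x y z w => by
    have h0 := neg_eq_zero.mpr (R4 x y z w)
    exact eq_of_sub_eq_zero (by rw [← h0]; abel)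
  have e5 : ∀ x y z w : g, μ (t x y z) w =
      LYD K b ρ μ x y * μ z w - μ z w * LYD K b ρ μ x y - μ z (t x y w) := fun x y z w =>
    eq_of_sub_eq_zero (by rw [← R5 x y z w]; abel)
  have E : ρ (b (t x y z) w) = ρ (t x y (b z w)) - ρ (b z (t x y w)) := by
    have := congrArg ρ (h.2.2.2.2.2.2.1 x y z w)
    simp only [hρ.map_add] at this
    rw [this]; abel
  simp only [LYD]
  rw [e5 x y z w, e5 x y w z, e4 w x y z, e4 z x y w, E,
    R3 x y z, R3 x y w, R3 x y (b z w)]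
  simp only [LYD]
  noncomm_ring

theorem LYaux_LYD_skew (h : IsLieYamaguti K b t) (hρ : IsLinearMap K ρ) (x y : g) :
    LYD K b ρ μ x y = - LYD K b ρ μ y x := by
  simp only [LYD]
  rw [h.2.2.1 x y, hρ.map_neg]
  abel

theorem LYaux_LYD_zero_left (hb : IsBilin K b) (hρ : IsLinearMap K ρ) (hμ : IsBilin K μ) (y : g) :
    LYD K b ρ μ 0 y = 0 := by
  simp only [LYD, (hμ.2 y).map_zero, (hμ.1 y).map_zero, hρ.map_zero,
    (hb.1 y).map_zero, zero_mul, mul_zero]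
  abel

theorem LYaux_LYD_zero_right (hb : IsBilin K b) (hρ : IsLinearMap K ρ) (hμ : IsBilin K μ) (x : g) :
    LYD K b ρ μ x 0 = 0 := by
  simp only [LYD, (hμ.2 x).map_zero, (hμ.1 x).map_zero, hρ.map_zero,
    (hb.2 x).map_zero, zero_mul, mul_zero]
  abel

theorem LYaux_LYD_add_left (hb : IsBilin K b) (hρ : IsLinearMap K ρ) (hμ : IsBilin K μ)
    (x x' y : g) : LYD K b ρ μ (x + x') y = LYD K b ρ μ x y + LYD K b ρ μ x' y := by
  simp only [LYD, (hμ.2 y).map_add, (hμ.1 y).map_add, hρ.map_add, (hb.1 y).map_add,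
    add_mul, mul_add]
  abel

theorem LYaux_LYD_add_right (hb : IsBilin K b) (hρ : IsLinearMap K ρ) (hμ : IsBilin K μ)
    (x y y' : g) : LYD K b ρ μ x (y + y') = LYD K b ρ μ x y + LYD K b ρ μ x y' := by
  simp only [LYD, (hμ.2 x).map_add, (hμ.1 x).map_add, hρ.map_add, (hb.2 x).map_add,
    add_mul, mul_add]
  abel

theorem LYaux_LYD_smul_left (hb : IsBilin K b) (hρ : IsLinearMap K ρ) (hμ : IsBilin K μ)
    (c : K) (x y : g) : LYD K b ρ μ (c • x) y = c • LYD K b ρ μ x y := by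
  simp only [LYD, (hμ.2 y).map_smul, (hμ.1 y).map_smul, hρ.map_smul, (hb.1 y).map_smul,
    smul_mul_assoc, mul_smul_comm, smul_sub, smul_add]

theorem LYaux_LYD_smul_right (hb : IsBilin K b) (hρ : IsLinearMap K ρ) (hμ : IsBilin K μ)
    (c : K) (x y : g) : LYD K b ρ μ x (c • y) = c • LYD K b ρ μ x y := by
  simp only [LYD, (hμ.2 x).map_smul, (hμ.1 x).map_smul, hρ.map_smul, (hb.2 x).map_smul,
    smul_mul_assoc, mul_smul_comm, smul_sub, smul_add]
-- pointwise solved forms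
theorem LYaux_pW (hrep : IsLYRep K b t ρ μ) :
    (∀ x y z (v : V), μ (b x y) z v = μ x z (ρ y v) - μ y z (ρ x v)) ∧
    (∀ x y z (v : V), μ x (b y z) v = ρ y (μ x z v) - ρ z (μ x y v)) ∧
    (∀ x y z (v : V), ρ (t x y z) v = LYD K b ρ μ x y (ρ z v) - ρ z (LYD K b ρ μ x y v)) ∧
    (∀ x y z w (v : V), μ x (t y z w) v =
      μ z w (μ x y v) - μ y w (μ x z v) + LYD K b ρ μ y z (μ x w v)) ∧
    (∀ x y z w (v : V), μ (t x y z) w v =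
      LYD K b ρ μ x y (μ z w v) - μ z w (LYD K b ρ μ x y v) - μ z (t x y w) v) := by
  obtain ⟨hρ, hμ, R1, R2, R3, R4, R5⟩ := hrep
  refine ⟨fun x y z v => ?_, fun x y z v => ?_, fun x y z v => ?_,
    fun x y z w v => ?_, fun x y z w v => ?_⟩
  · have := DFunLike.congr_fun (R1 x y z) v
    simp only [LinearMap.sub_apply, LinearMap.add_apply, Module.End.mul_apply,
      LinearMap.zero_apply] at this
    apply eq_of_sub_eq_zero; rw [← this]; abel
  · have := DFunLike.congr_fun (R2 x y z) v
    simp only [LinearMap.sub_apply, LinearMap.add_apply, Module.End.mul_apply,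
      LinearMap.zero_apply] at this
    apply eq_of_sub_eq_zero; rw [← this]; abel
  · have := DFunLike.congr_fun (R3 x y z) v
    simpa only [LinearMap.sub_apply, Module.End.mul_apply] using this
  · have := DFunLike.congr_fun (R4 x y z w) v
    simp only [LinearMap.sub_apply, LinearMap.add_apply, Module.End.mul_apply,
      LinearMap.zero_apply] at this
    have h0 : -(μ z w (μ x y v) - μ y w (μ x z v) - μ x (t y z w) v
        + LYD K b ρ μ y z (μ x w v)) = 0 := by rw [this, neg_zero]
    apply eq_of_sub_eq_zero; rw [← h0]; abel
  · have := DFunLike.congr_fun (R5 x y z w) v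
    simp only [LinearMap.sub_apply, LinearMap.add_apply, Module.End.mul_apply] at this
    have h2 := sub_eq_zero_of_eq this
    apply eq_of_sub_eq_zero; rw [← h2]; abel

theorem LYaux_pA (h : IsLieYamaguti K b t) (hrep : IsLYRep K b t ρ μ) (x y z : g) (v : V) :
    LYD K b ρ μ (b x y) z v = - LYD K b ρ μ (b y z) x v - LYD K b ρ μ (b z x) y v := by
  have := DFunLike.congr_fun (LYaux_lemA h hrep x y z) v
  simp only [LinearMap.add_apply, LinearMap.zero_apply] at this
  apply eq_of_sub_eq_zero; rw [← this]; abel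

theorem LYaux_pB (h : IsLieYamaguti K b t) (hrep : IsLYRep K b t ρ μ) (x y z w : g) (v : V) :
    LYD K b ρ μ x y (LYD K b ρ μ z w v) = LYD K b ρ μ (t x y z) w v
      + LYD K b ρ μ z (t x y w) v + LYD K b ρ μ z w (LYD K b ρ μ x y v) := by
  have := DFunLike.congr_fun (LYaux_lemB h hrep x y z w) v
  simp only [LinearMap.sub_apply, LinearMap.add_apply, Module.End.mul_apply] at this
  have h2 := sub_eq_zero_of_eq this
  apply eq_of_sub_eq_zero; rw [← h2]; abel

theorem LYaux_pD : ∀ (x y : g) (v : V), LYD K b ρ μ x y v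
    = μ y x v - μ x y v + ρ x (ρ y v) - ρ y (ρ x v) - ρ (b x y) v := by
  intro x y v
  simp only [LYD, LinearMap.sub_apply, LinearMap.add_apply, Module.End.mul_apply]

theorem LYaux_fwd (h : IsLieYamaguti K b t) (hρ : IsLinearMap K ρ) (hμ : IsBilin K μ)
    (hrep : IsLYRep K b t ρ μ) :
    IsLieYamaguti K
      (fun p q : g × V => (b p.1 q.1, ρ p.1 q.2 - ρ q.1 p.2))
      (fun p q r : g × V =>
        (t p.1 q.1 r.1, LYD K b ρ μ p.1 q.1 r.2 + μ q.1 r.1 p.2 - μ p.1 r.1 q.2)) := by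
  obtain ⟨hb, ht, hbs, hts, hL1, hL2, hL3, hL4⟩ := id h
  obtain ⟨W1, W2, W3, W4, W5⟩ := LYaux_pW hrep
  refine ⟨⟨fun q => ⟨fun p p' => ?_, fun c p => ?_⟩, fun p => ⟨fun q q' => ?_, fun c q => ?_⟩⟩,
    ⟨fun q r => ⟨fun p p' => ?_, fun c p => ?_⟩, fun p r => ⟨fun q q' => ?_, fun c q => ?_⟩,
      fun p q => ⟨fun r r' => ?_, fun c r => ?_⟩⟩,
    fun p q => ?_, fun p q r => ?_, fun p q r => ?_, fun p q r s => ?_,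
    fun p q r s => ?_, fun p q r s u => ?_⟩
  -- bilinearity of the bracket
  · refine Prod.ext_iff.mpr ⟨?_, ?_⟩ <;>
      simp only [Prod.fst_add, Prod.snd_add, Prod.mk_add_mk, (hb.1 _).map_add, hρ.map_add,
        map_add, LinearMap.add_apply] <;> abel
  · refine Prod.ext_iff.mpr ⟨?_, ?_⟩ <;>
      simp only [Prod.smul_fst, Prod.smul_snd, Prod.smul_mk, (hb.1 _).map_smul, hρ.map_smul,
        map_smul, LinearMap.smul_apply, smul_sub]
  · refine Prod.ext_iff.mpr ⟨?_, ?_⟩ <;>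
      simp only [Prod.fst_add, Prod.snd_add, Prod.mk_add_mk, (hb.2 _).map_add, hρ.map_add,
        map_add, LinearMap.add_apply] <;> abel
  · refine Prod.ext_iff.mpr ⟨?_, ?_⟩ <;>
      simp only [Prod.smul_fst, Prod.smul_snd, Prod.smul_mk, (hb.2 _).map_smul, hρ.map_smul,
        map_smul, LinearMap.smul_apply, smul_sub]
  -- trilinearity
  · refine Prod.ext_iff.mpr ⟨?_, ?_⟩ <;>
      simp only [Prod.fst_add, Prod.snd_add, Prod.mk_add_mk, (ht.1 _ _).map_add,
        LYaux_LYD_add_left hb hρ hμ, (hμ.1 _).map_add, map_add, LinearMap.add_apply] <;> abel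
  · refine Prod.ext_iff.mpr ⟨?_, ?_⟩ <;>
      simp only [Prod.smul_fst, Prod.smul_snd, Prod.smul_mk, (ht.1 _ _).map_smul,
        LYaux_LYD_smul_left hb hρ hμ, (hμ.1 _).map_smul, map_smul, LinearMap.smul_apply,
        smul_sub, smul_add]
  · refine Prod.ext_iff.mpr ⟨?_, ?_⟩ <;>
      simp only [Prod.fst_add, Prod.snd_add, Prod.mk_add_mk, (ht.2.1 _ _).map_add,
        LYaux_LYD_add_right hb hρ hμ, (hμ.1 _).map_add, map_add, LinearMap.add_apply] <;> abel
  · refine Prod.ext_iff.mpr ⟨?_, ?_⟩ <;>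
      simp only [Prod.smul_fst, Prod.smul_snd, Prod.smul_mk, (ht.2.1 _ _).map_smul,
        LYaux_LYD_smul_right hb hρ hμ, (hμ.1 _).map_smul, map_smul, LinearMap.smul_apply,
        smul_sub, smul_add]
  · refine Prod.ext_iff.mpr ⟨?_, ?_⟩ <;>
      simp only [Prod.fst_add, Prod.snd_add, Prod.mk_add_mk, (ht.2.2 _ _).map_add,
        (hμ.2 _).map_add, map_add, LinearMap.add_apply] <;> abel
  · refine Prod.ext_iff.mpr ⟨?_, ?_⟩ <;>
      simp only [Prod.smul_fst, Prod.smul_snd, Prod.smul_mk, (ht.2.2 _ _).map_smul,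
        (hμ.2 _).map_smul, map_smul, LinearMap.smul_apply, smul_sub, smul_add]
  -- skew-symmetry of the binary bracket
  · refine Prod.ext_iff.mpr ⟨hbs _ _, ?_⟩
    simp only [Prod.snd_neg, Prod.fst_neg]
    abel
  -- skew-symmetry of the ternary bracket
  · refine Prod.ext_iff.mpr ⟨hts _ _ _, ?_⟩
    simp only [Prod.snd_neg]
    rw [LYaux_LYD_skew h hρ p.1 q.1]
    simp only [LinearMap.neg_apply]
    abel
  -- LY1
  · refine Prod.ext_iff.mpr ⟨?_, ?_⟩
    · simpa using hL1 p.1 q.1 r.1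
    · simp only [Prod.fst_add, Prod.snd_add, Prod.fst_zero, Prod.snd_zero, map_sub,
        LYaux_pD (b := b) (ρ := ρ) (μ := μ)]
      abel
  -- LY2
  · refine Prod.ext_iff.mpr ⟨?_, ?_⟩
    · simpa using hL2 p.1 q.1 r.1 s.1
    · simp only [Prod.fst_add, Prod.snd_add, Prod.fst_zero, Prod.snd_zero, map_sub]
      rw [LYaux_pA h hrep p.1 q.1 r.1 s.2, W1 p.1 q.1 s.1 r.2, W1 q.1 r.1 s.1 p.2,
        W1 r.1 p.1 s.1 q.2]
      abel
  -- LY3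
  · refine Prod.ext_iff.mpr ⟨?_, ?_⟩
    · simpa using hL3 p.1 q.1 r.1 s.1
    · simp only [Prod.fst_add, Prod.snd_add, map_sub, map_add]
      rw [W3 p.1 q.1 r.1 s.2, W3 p.1 q.1 s.1 r.2, W2 q.1 r.1 s.1 p.2, W2 p.1 r.1 s.1 q.2]
      abel
  -- LY4
  · refine Prod.ext_iff.mpr ⟨?_, ?_⟩
    · simpa using hL4 p.1 q.1 r.1 s.1 u.1
    · simp only [Prod.fst_add, Prod.snd_add, map_sub, map_add]
      rw [LYaux_pB h hrep p.1 q.1 r.1 s.1 u.2,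
        W4 q.1 r.1 s.1 u.1 p.2, W4 p.1 r.1 s.1 u.1 q.2,
        W5 p.1 q.1 r.1 u.1 s.2, W4 r.1 p.1 q.1 u.1 s.2,
        W5 p.1 q.1 s.1 u.1 r.2, W4 s.1 p.1 q.1 u.1 r.2]
      abel

theorem LYaux_bwd (h : IsLieYamaguti K b t) (hρ : IsLinearMap K ρ) (hμ : IsBilin K μ)
    (h' : IsLieYamaguti K
      (fun p q : g × V => (b p.1 q.1, ρ p.1 q.2 - ρ q.1 p.2))
      (fun p q r : g × V =>
        (t p.1 q.1 r.1, LYD K b ρ μ p.1 q.1 r.2 + μ q.1 r.1 p.2 - μ p.1 r.1 q.2))) :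
    IsLYRep K b t ρ μ := by
  obtain ⟨hb, ht, hbs, hts, hL1, hL2, hL3, hL4⟩ := id h
  obtain ⟨_, _, _, _, _, L2', L3', L4'⟩ := h'
  have hb0r : ∀ x : g, b x 0 = 0 := fun x => (hb.2 x).map_zero
  have hb0l : ∀ x : g, b 0 x = 0 := fun x => (hb.1 x).map_zero
  have ht01 : ∀ y z : g, t 0 y z = 0 := fun y z => (ht.1 y z).map_zero
  have ht02 : ∀ x z : g, t x 0 z = 0 := fun x z => (ht.2.1 x z).map_zero
  have ht03 : ∀ x y : g, t x y 0 = 0 := fun x y => (ht.2.2 x y).map_zero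
  have hρ0 : ρ 0 = 0 := hρ.map_zero
  have hμ0l : ∀ y : g, μ 0 y = 0 := fun y => (hμ.1 y).map_zero
  have hμ0r : ∀ x : g, μ x 0 = 0 := fun x => (hμ.2 x).map_zero
  have hD0l := LYaux_LYD_zero_left (b := b) hb hρ hμ
  have hD0r := LYaux_LYD_zero_right (b := b) hb hρ hμ
  refine ⟨hρ, hμ, fun x y z => ?_, fun x y z => ?_, fun x y z => ?_,
    fun x y z w => ?_, fun x y z w => ?_⟩
  · apply LinearMap.ext; intro v
    have H := congrArg Prod.snd (L2' (y, (0:V)) (((0:g)), v) (x, 0) (z, 0))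
    simp only [Prod.snd_add, Prod.snd_zero, hb0r, hb0l, hρ0, hμ0l, hμ0r, ht01, ht02, ht03,
      hD0l, hD0r, LinearMap.zero_apply, map_zero, sub_zero, zero_sub, add_zero, zero_add,
      map_neg, neg_neg] at H
    simp only [LinearMap.sub_apply, LinearMap.add_apply, Module.End.mul_apply, LinearMap.zero_apply]
    rw [← neg_zero, ← H]; abel
  · apply LinearMap.ext; intro v
    have H := congrArg Prod.snd (L3' (x, (0:V)) (((0:g)), v) (y, 0) (z, 0))
    simp only [Prod.snd_add, Prod.snd_zero, hb0r, hb0l, hρ0, hμ0l, hμ0r, ht01, ht02, ht03,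
      hD0l, hD0r, LinearMap.zero_apply, map_zero, sub_zero, zero_sub, add_zero, zero_add,
      map_neg, neg_neg] at H
    simp only [LinearMap.sub_apply, LinearMap.add_apply, Module.End.mul_apply, LinearMap.zero_apply]
    have h2 := sub_eq_zero_of_eq H
    rw [← neg_zero, ← h2]; abel
  · apply LinearMap.ext; intro v
    have H := congrArg Prod.snd (L3' (x, (0:V)) (y, 0) (z, 0) (((0:g)), v))
    simp only [Prod.snd_add, Prod.snd_zero, hb0r, hb0l, hρ0, hμ0l, hμ0r, ht01, ht02, ht03,
      hD0l, hD0r, LinearMap.zero_apply, map_zero, sub_zero, zero_sub, add_zero, zero_add,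
      map_neg, neg_neg] at H
    simp only [LinearMap.sub_apply, LinearMap.add_apply, Module.End.mul_apply, LinearMap.zero_apply]
    have h2 := sub_eq_zero_of_eq H
    apply eq_of_sub_eq_zero
    rw [← neg_zero, ← h2]; abel
  · apply LinearMap.ext; intro v
    have H := congrArg Prod.snd (L4' (((0:g)), v) (x, 0) (y, 0) (z, 0) (w, 0))
    simp only [Prod.snd_add, Prod.snd_zero, hb0r, hb0l, hρ0, hμ0l, hμ0r, ht01, ht02, ht03,
      hD0l, hD0r, LinearMap.zero_apply, map_zero, sub_zero, zero_sub, add_zero, zero_add,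
      map_neg, neg_neg] at H
    simp only [LinearMap.sub_apply, LinearMap.add_apply, Module.End.mul_apply, LinearMap.zero_apply]
    have h2 := sub_eq_zero_of_eq H
    rw [← neg_zero, ← h2]; abel
  · apply LinearMap.ext; intro v
    have H := congrArg Prod.snd (L4' (x, (0:V)) (y, 0) (((0:g)), v) (z, 0) (w, 0))
    simp only [Prod.snd_add, Prod.snd_zero, hb0r, hb0l, hρ0, hμ0l, hμ0r, ht01, ht02, ht03,
      hD0l, hD0r, LinearMap.zero_apply, map_zero, sub_zero, zero_sub, add_zero, zero_add,
      map_neg, neg_neg] at H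
    simp only [LinearMap.sub_apply, LinearMap.add_apply, Module.End.mul_apply, LinearMap.zero_apply]
    have h2 := sub_eq_zero_of_eq H
    apply eq_of_sub_eq_zero
    rw [← neg_zero, ← h2]; abel


end LYauxSect

/-- `(V;ρ,μ)` is a representation iff the semidirect sum is a
Lie-Yamaguti algebra. -/
theorem statement2 (K g V : Type*) [Field K] [CharZero K] [AddCommGroup g] [Module K g]
    [AddCommGroup V] [Module K V]
    (b : g → g → g) (t : g → g → g → g) (h : IsLieYamaguti K b t)
    (ρ : g → Module.End K V) (μ : g → g → Module.End K V)
    (hρ : IsLinearMap K ρ) (hμ : IsBilin K μ) :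
    IsLYRep K b t ρ μ ↔
      IsLieYamaguti K
        (fun p q : g × V => (b p.1 q.1, ρ p.1 q.2 - ρ q.1 p.2))
        (fun p q r : g × V =>
          (t p.1 q.1 r.1, LYD K b ρ μ p.1 q.1 r.2 + μ q.1 r.1 p.2 - μ p.1 r.1 q.2)) := by
  exact ⟨fun hrep => LYaux_fwd h hρ hμ hrep, fun h' => LYaux_bwd h hρ hμ h'⟩
end

section
/- Let (V;ρ,μ) be a representation of a Lie-Yamaguti algebra (g,[·,·],⟨·,·,·⟩). Define ρ*: g→End(V*) by (ρ*(x)α)(v)=−α(ρ(x)v) and define the bilinear map (−μ*τ): g×g→End(V*) by ((−μ*τ)(x,y)α)(v)=α(μ(y,x)v). Then (V*; ρ*, −μ*τ) is a representation of g on the dual space V* (called the dual representation). -/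
/-- the dual representation `(V*; ρ*, −μ*τ)` is a representation. -/
theorem statement4 (K g V : Type*) [Field K] [CharZero K] [AddCommGroup g] [Module K g]
    [AddCommGroup V] [Module K V]
    (b : g → g → g) (t : g → g → g → g) (h : IsLieYamaguti K b t)
    (ρ : g → Module.End K V) (μ : g → g → Module.End K V)
    (hrep : IsLYRep K b t ρ μ) :
    IsLYRep K b t (dualRho K ρ)
      (fun x y => ((μ y x).dualMap : Module.End K (Module.Dual K V))) := by
  obtain ⟨hρ, hμ, R1, R2, R3, R4, R5⟩ := hrep
  refine ⟨?_, ⟨?_, ?_⟩, ?_, ?_, ?_, ?_, ?_⟩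
  · constructor
    · intro x y
      ext φ v
      simp [dualRho, hρ.map_add]
      ring
    · intro c x
      ext φ v
      simp [dualRho, hρ.map_smul]
  · intro y
    constructor
    · intro x₁ x₂
      ext φ v
      simp [(hμ.2 y).map_add]
    · intro c x
      ext φ v
      simp [(hμ.2 y).map_smul]
  · intro x
    constructor
    · intro y₁ y₂
      ext φ v
      simp [(hμ.1 x).map_add]
    · intro c y
      ext φ v
      simp [(hμ.1 x).map_smul]
  · intro x y z
    have e0 := R2 z x y
    ext φ v
    have e1 := congrArg φ (LinearMap.congr_fun e0 v)
    simp only [dualRho, LYD, LinearMap.sub_apply, LinearMap.add_apply, Module.End.mul_apply,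
      LinearMap.neg_apply, LinearMap.zero_apply, LinearMap.dualMap_apply, map_sub, map_add,
      map_neg, map_zero] at e1 ⊢
    linear_combination e1
  · intro x y z
    have e0 := R1 y z x
    ext φ v
    have e1 := congrArg φ (LinearMap.congr_fun e0 v)
    simp only [dualRho, LYD, LinearMap.sub_apply, LinearMap.add_apply, Module.End.mul_apply,
      LinearMap.neg_apply, LinearMap.zero_apply, LinearMap.dualMap_apply, map_sub, map_add,
      map_neg, map_zero] at e1 ⊢
    linear_combination e1
  · intro x y z
    have e0 : ρ (t x y z) - (LYD K b ρ μ x y * ρ z - ρ z * LYD K b ρ μ x y) = 0 :=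
      sub_eq_zero_of_eq (R3 x y z)
    ext φ v
    have e1 := congrArg φ (LinearMap.congr_fun e0 v)
    simp only [dualRho, LYD, LinearMap.sub_apply, LinearMap.add_apply, Module.End.mul_apply,
      LinearMap.neg_apply, LinearMap.zero_apply, LinearMap.dualMap_apply, map_sub, map_add,
      map_neg, map_zero] at e1 ⊢
    linear_combination -e1
  · intro x y z w
    have h1 : μ (t y z w) x + μ w (t y z x)
        - (LYD K b ρ μ y z * μ w x - μ w x * LYD K b ρ μ y z) = 0 :=
      sub_eq_zero_of_eq (R5 y z w x)
    have h2 : μ z x * μ w y - μ y x * μ w z - μ w (t y z x) + LYD K b ρ μ y z * μ w x = 0 :=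
      R4 w y z x
    have e0 : μ y x * μ w z - μ z x * μ w y - μ (t y z w) x - μ w x * LYD K b ρ μ y z = 0 := by
      calc μ y x * μ w z - μ z x * μ w y - μ (t y z w) x - μ w x * LYD K b ρ μ y z
          = -((μ (t y z w) x + μ w (t y z x)
              - (LYD K b ρ μ y z * μ w x - μ w x * LYD K b ρ μ y z))
            + (μ z x * μ w y - μ y x * μ w z - μ w (t y z x) + LYD K b ρ μ y z * μ w x)) := by
            abel
        _ = 0 := by rw [h1, h2, add_zero, neg_zero]
    ext φ v
    have e1 := congrArg φ (LinearMap.congr_fun e0 v)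
    simp only [dualRho, LYD, LinearMap.sub_apply, LinearMap.add_apply, Module.End.mul_apply,
      LinearMap.neg_apply, LinearMap.zero_apply, LinearMap.dualMap_apply, map_sub, map_add,
      map_neg, map_zero] at e1 ⊢
    linear_combination e1
  · intro x y z w
    have e0 : μ (t x y w) z + μ w (t x y z)
        - (LYD K b ρ μ x y * μ w z - μ w z * LYD K b ρ μ x y) = 0 :=
      sub_eq_zero_of_eq (R5 x y w z)
    ext φ v
    have e1 := congrArg φ (LinearMap.congr_fun e0 v)
    simp only [dualRho, LYD, LinearMap.sub_apply, LinearMap.add_apply, Module.End.mul_apply,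
      LinearMap.neg_apply, LinearMap.zero_apply, LinearMap.dualMap_apply, map_sub, map_add,
      map_neg, map_zero] at e1 ⊢
    linear_combination e1
end

section
/- Let (A,*,{·,·,·}) be a pre-Lie-Yamaguti algebra. Then for all x,y,z,w,t in A: (i) {[x,y]_C,z,w}_D+{[y,z]_C,x,w}_D+{[z,x]_C,y,w}_D=0; (ii) {x,y,{z,w,t}_D}_D−{{x,y,z}_D,w,t}_D−{{x,y,z},w,t}_D+{{y,x,z},w,t}_D−{z,{x,y,w}_D,t}_D−{z,{x,y,w},t}_D+{z,{y,x,w},t}_D−{z,w,{x,y,t}_D}_D=0. -/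
/-- identities (3.9) and (3.10) in a pre-Lie-Yamaguti algebra. -/
theorem statement7 (K A : Type*) [Field K] [CharZero K] [AddCommGroup A] [Module K A]
    (m : A → A → A) (br : A → A → A → A) (h : IsPreLY K m br) :
    (∀ x y z w,
        preD m br (preC m x y) z w + preD m br (preC m y z) x w
          + preD m br (preC m z x) y w = 0) ∧
    (∀ x y z w t,
        preD m br x y (preD m br z w t) - preD m br (preD m br x y z) w t
          - preD m br (br x y z) w t + preD m br (br y x z) w t
          - preD m br z (preD m br x y w) t - preD m br z (br x y w) t
          + preD m br z (br y x w) t - preD m br z w (preD m br x y t) = 0) := by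
  obtain ⟨hm, hbr, p1, p2, p3, p4, p5⟩ := h
  have mal : ∀ a b c : A, m (a + b) c = m a c + m b c := fun a b c => (hm.1 c).map_add a b
  have msl : ∀ a b c : A, m (a - b) c = m a c - m b c := fun a b c => (hm.1 c).map_sub a b
  have mar : ∀ a b c : A, m a (b + c) = m a b + m a c := fun a b c => (hm.2 a).map_add b c
  have msr : ∀ a b c : A, m a (b - c) = m a b - m a c := fun a b c => (hm.2 a).map_sub b c
  have b1a : ∀ a b c d : A, br (a + b) c d = br a c d + br b c d :=
    fun a b c d => (hbr.1 c d).map_add a b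
  have b1s : ∀ a b c d : A, br (a - b) c d = br a c d - br b c d :=
    fun a b c d => (hbr.1 c d).map_sub a b
  have b2a : ∀ a b c d : A, br a (b + c) d = br a b d + br a c d :=
    fun a b c d => (hbr.2.1 a d).map_add b c
  have b2s : ∀ a b c d : A, br a (b - c) d = br a b d - br a c d :=
    fun a b c d => (hbr.2.1 a d).map_sub b c
  have b3a : ∀ a b c d : A, br a b (c + d) = br a b c + br a b d :=
    fun a b c d => (hbr.2.2 a b).map_add c d
  have b3s : ∀ a b c d : A, br a b (c - d) = br a b c - br a b d :=
    fun a b c d => (hbr.2.2 a b).map_sub c d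
  constructor
  · intro x y z w
    have h1 := p1 x y w z
    have h2 := p1 x z w y
    have h3 := p1 y z w x
    have h4 := p5 x y z w
    have h5 := p5 x z y w
    have h6 := p5 y z x w
    have h7 := p2 w x y z
    have h8 := p2 w y x z
    have h9 := p2 w z x y
    simp only [preD, preC, preAssoc, mal, msl, mar, msr, b1a, b1s, b2a, b2s, b3a, b3s]
      at h1 h2 h3 h4 h5 h6 h7 h8 h9 ⊢
    linear_combination (norm := abel1) -h1 + h2 - h3 + h4 - h5 + h6 + h7 - h8 + h9
  · intro x y z w t
    have h1 := p4 x y t w z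
    have h2 := p4 x y t z w
    have h3 := p5 x y (m w z) t
    have h4 := p5 x y (m z w) t
    have h5 := p5 x y w (m z t)
    have h6 := p5 x y z (m w t)
    have h7 := congrArg (fun u => m w u) (p5 x y z t)
    have h8 := congrArg (fun u => m z u) (p5 x y w t)
    have h9 := congrArg (fun u => m u t) (p5 x y w z)
    have h10 := congrArg (fun u => m u t) (p5 x y z w)
    have h11 := congrArg (fun u => m u t) (p2 x y w z)
    have h12 := congrArg (fun u => m u t) (p2 y x w z)
    simp only [preD, preC, preAssoc, mal, msl, mar, msr, b1a, b1s, b2a, b2s, b3a, b3s]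
      at h1 h2 h3 h4 h5 h6 h7 h8 h9 h10 h11 h12 ⊢
    linear_combination (norm := abel1) -h1 + h2 - h3 + h4 + h5 - h6 + h7 - h8 - h9 + h10
      + h11 - h12
end

section
/- Let (A,*,{·,·,·}) be a pre-Lie-Yamaguti algebra. Then the brackets [x,y]_C := x*y−y*x and ⟨x,y,z⟩_C := {x,y,z}_D+{x,y,z}−{y,x,z} define a Lie-Yamaguti algebra structure on A (the subadjacent Lie-Yamaguti algebra A^c). -/
set_option maxHeartbeats 1600000 in
/-- the subadjacent brackets of a pre-Lie-Yamaguti algebra form a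
Lie-Yamaguti algebra. -/
theorem statement8 (K A : Type*) [Field K] [CharZero K] [AddCommGroup A] [Module K A]
    (m : A → A → A) (br : A → A → A → A) (h : IsPreLY K m br) :
    IsLieYamaguti K (preC m) (subT m br) := by
  obtain ⟨hm, hbr, p1, p2, p3, p4, p5⟩ := h
  have ma1 : ∀ a b c : A, m (a + b) c = m a c + m b c := fun a b c => (hm.1 c).map_add a b
  have ma2 : ∀ a b c : A, m a (b + c) = m a b + m a c := fun a b c => (hm.2 a).map_add b c
  have mn1 : ∀ a c : A, m (-a) c = - m a c := fun a c => (hm.1 c).map_neg a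
  have mn2 : ∀ a c : A, m a (-c) = - m a c := fun a c => (hm.2 a).map_neg c
  have ms1 : ∀ a b c : A, m (a - b) c = m a c - m b c := fun a b c => (hm.1 c).map_sub a b
  have ms2 : ∀ a b c : A, m a (b - c) = m a b - m a c := fun a b c => (hm.2 a).map_sub b c
  have msm1 : ∀ (k : K) (a c : A), m (k • a) c = k • m a c := fun k a c => (hm.1 c).map_smul k a
  have msm2 : ∀ (k : K) (a c : A), m a (k • c) = k • m a c := fun k a c => (hm.2 a).map_smul k c
  have ba1 : ∀ a b c d : A, br (a + b) c d = br a c d + br b c d :=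
    fun a b c d => (hbr.1 c d).map_add a b
  have ba2 : ∀ a b c d : A, br a (b + c) d = br a b d + br a c d :=
    fun a b c d => (hbr.2.1 a d).map_add b c
  have ba3 : ∀ a b c d : A, br a b (c + d) = br a b c + br a b d :=
    fun a b c d => (hbr.2.2 a b).map_add c d
  have bn1 : ∀ a c d : A, br (-a) c d = - br a c d := fun a c d => (hbr.1 c d).map_neg a
  have bn2 : ∀ a b d : A, br a (-b) d = - br a b d := fun a b d => (hbr.2.1 a d).map_neg b
  have bn3 : ∀ a b c : A, br a b (-c) = - br a b c := fun a b c => (hbr.2.2 a b).map_neg c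
  have bs1 : ∀ a b c d : A, br (a - b) c d = br a c d - br b c d :=
    fun a b c d => (hbr.1 c d).map_sub a b
  have bs2 : ∀ a b c d : A, br a (b - c) d = br a b d - br a c d :=
    fun a b c d => (hbr.2.1 a d).map_sub b c
  have bs3 : ∀ a b c d : A, br a b (c - d) = br a b c - br a b d :=
    fun a b c d => (hbr.2.2 a b).map_sub c d
  have bsm1 : ∀ (k : K) (a c d : A), br (k • a) c d = k • br a c d :=
    fun k a c d => (hbr.1 c d).map_smul k a
  have bsm2 : ∀ (k : K) (a b d : A), br a (k • b) d = k • br a b d :=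
    fun k a b d => (hbr.2.1 a d).map_smul k b
  have bsm3 : ∀ (k : K) (a b c : A), br a b (k • c) = k • br a b c :=
    fun k a b c => (hbr.2.2 a b).map_smul k c
  refine ⟨⟨?_, ?_⟩, ⟨?_, ?_, ?_⟩, ?_, ?_, ?_, ?_, ?_, ?_⟩
  · intro y
    refine ⟨fun a b => ?_, fun k a => ?_⟩
    · simp only [preC, ma1, ma2]; abel
    · simp only [preC, msm1, msm2, smul_sub]
  · intro x
    refine ⟨fun a b => ?_, fun k a => ?_⟩
    · simp only [preC, ma1, ma2]; abel
    · simp only [preC, msm1, msm2, smul_sub]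
  · intro y z
    refine ⟨fun a b => ?_, fun k a => ?_⟩
    · simp only [subT, preD, preAssoc, ba1, ba2, ba3, ma1, ma2]; abel
    · simp only [subT, preD, preAssoc, bsm1, bsm2, bsm3, msm1, msm2, smul_sub, smul_add]
  · intro x z
    refine ⟨fun a b => ?_, fun k a => ?_⟩
    · simp only [subT, preD, preAssoc, ba1, ba2, ba3, ma1, ma2]; abel
    · simp only [subT, preD, preAssoc, bsm1, bsm2, bsm3, msm1, msm2, smul_sub, smul_add]
  · intro x y
    refine ⟨fun a b => ?_, fun k a => ?_⟩
    · simp only [subT, preD, preAssoc, ba1, ba2, ba3, ma1, ma2]; abel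
    · simp only [subT, preD, preAssoc, bsm1, bsm2, bsm3, msm1, msm2, smul_sub, smul_add]
  · intro x y
    simp only [preC]; abel
  · intro x y z
    simp only [subT, preD, preAssoc]; abel
  · -- LY1
    intro x y z
    simp only [subT, preD, preAssoc, preC, ba1, ba2, ba3, bn1, bn2, bn3, bs1, bs2, bs3,
      ma1, ma2, mn1, mn2, ms1, ms2]
    abel
  · -- LY2
    intro x y z w
    have a1 := p1 x y z w
    have a2 := p1 x y w z
    have a3 := p1 x z y w
    have a4 := p1 x z w y
    have a5 := p1 y z x w
    have a6 := p1 y z w x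
    have a7 := p2 w x y z
    have a8 := p2 w y x z
    have a9 := p2 w z x y
    have a10 := p5 x y z w
    have a11 := p5 x z y w
    have a12 := p5 y z x w
    simp only [subT, preD, preAssoc, preC, ba1, ba2, ba3, bn1, bn2, bn3, bs1, bs2, bs3,
      ma1, ma2, mn1, mn2, ms1, ms2] at a1 a2 a3 a4 a5 a6 a7 a8 a9 a10 a11 a12 ⊢
    linear_combination (norm := abel) -a1 - a2 + a3 + a4 - a5 - a6 + a7 - a8 + a9 + a10
      - a11 + a12
  · -- LY3
    intro x y z w
    have a1 := p2 x y z w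
    have a2 := p2 y x z w
    have a3 := p5 x y z w
    have a4 := p5 x y w z
    simp only [subT, preD, preAssoc, preC, ba1, ba2, ba3, bn1, bn2, bn3, bs1, bs2, bs3,
      ma1, ma2, mn1, mn2, ms1, ms2] at a1 a2 a3 a4 ⊢
    linear_combination (norm := abel) a1 - a2 - a3 + a4
  · -- LY4
    intro x y z w u
    have a1 := p3 x y z w u
    have a2 := p3 y x z w u
    have a3 := p4 x y z w u
    have a4 := p4 x y w z u
    have a5 := p4 x y u z w
    have a6 := p4 x y u w z
    have a7 := congrArg (fun a => m a u) (p2 x y z w)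
    have a8 := congrArg (fun a => m a u) (p2 y x z w)
    have a9 := p5 x y (m z w) u
    have a10 := p5 x y w (m z u)
    have a11 := p5 x y (m w z) u
    have a12 := p5 x y z (m w u)
    have a13 := congrArg (fun a => m a u) (p5 x y z w)
    have a14 := congrArg (fun a => m w a) (p5 x y z u)
    have a15 := congrArg (fun a => m a u) (p5 x y w z)
    have a16 := congrArg (fun a => m z a) (p5 x y w u)
    simp only [subT, preD, preAssoc, preC, ba1, ba2, ba3, bn1, bn2, bn3, bs1, bs2, bs3,
      ma1, ma2, mn1, mn2, ms1, ms2] at a1 a2 a3 a4 a5 a6 a7 a8 a9 a10 a11 a12 a13 a14 a15 a16 ⊢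
    linear_combination (norm := abel) -a1 + a2 - a3 + a4 + a5 - a6 - a7 + a8 + a9 + a10
      - a11 - a12 + a13 + a14 - a15 - a16
end

section
/- Let (A,*,{·,·,·}) be a pre-Lie-Yamaguti algebra, and define L: A→End(A) by L_x z = x*z and 𝓡: A×A→End(A) by 𝓡(x,y)z = {z,x,y}. Then (A;L,𝓡) is a representation of the subadjacent Lie-Yamaguti algebra A^c on A, and the identity map Id: A→A is a relative Rota-Baxter operator on A^c with respect to the representation (A;L,𝓡). -/
/-- `(A; L, 𝓡)` is a representation of the subadjacent Lie-Yamaguti algebra,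
and the identity map is a relative Rota-Baxter operator with respect to it. -/
theorem statement9 (K A : Type*) [Field K] [CharZero K] [AddCommGroup A] [Module K A]
    (m : A → A → A) (br : A → A → A → A)
    (hm : IsBilin K m) (hbr : IsTrilin K br) (h : IsPreLY K m br) :
    IsLYRep K (preC m) (subT m br) (Llin K m hm) (Rlin K br hbr) ∧
    IsRelRB K (preC m) (subT m br) (Llin K m hm) (Rlin K br hbr) (id : A → A) := by

  obtain ⟨-, -, P1, P2, P3, P4, P5⟩ := h
  -- pointwise linearity helpers
  have msub1 : ∀ a b c : A, m (a - b) c = m a c - m b c := fun a b c =>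
    (IsLinearMap.mk' _ (hm.1 c)).map_sub a b
  have bsub2 : ∀ x a b c : A, br x (a - b) c = br x a c - br x b c := fun x a b c =>
    (IsLinearMap.mk' _ (hbr.2.1 x c)).map_sub a b
  have badd2 : ∀ x a b c : A, br x (a + b) c = br x a c + br x b c := fun x a b c =>
    (IsLinearMap.mk' _ (hbr.2.1 x c)).map_add a b
  have bsub3 : ∀ x y a b : A, br x y (a - b) = br x y a - br x y b := fun x y a b =>
    (IsLinearMap.mk' _ (hbr.2.2 x y)).map_sub a b
  have badd3 : ∀ x y a b : A, br x y (a + b) = br x y a + br x y b := fun x y a b =>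
    (IsLinearMap.mk' _ (hbr.2.2 x y)).map_add a b
  have msub2 : ∀ x a b : A, m x (a - b) = m x a - m x b := fun x a b =>
    (IsLinearMap.mk' _ (hm.2 x)).map_sub a b
  have madd2 : ∀ x a b : A, m x (a + b) = m x a + m x b := fun x a b =>
    (IsLinearMap.mk' _ (hm.2 x)).map_add a b
  have Lapp : ∀ x v : A, Llin K m hm x v = m x v := fun _ _ => rfl
  have Rapp : ∀ x y v : A, Rlin K br hbr x y v = br v x y := fun _ _ _ => rfl
  have LYDeq : ∀ x y z : A,
      (LYD K (preC m) (Llin K m hm) (Rlin K br hbr) x y) z = preD m br x y z := by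
    intro x y z
    simp only [LYD, LinearMap.sub_apply, LinearMap.add_apply, Module.End.mul_apply,
      Lapp, Rapp, preD, preC, preAssoc, msub1]
    abel
  refine ⟨⟨?_, ?_, ?_, ?_, ?_, ?_, ?_⟩, ?_, ?_, ?_⟩
  · constructor
    · intro x y; ext v
      simp only [LinearMap.add_apply, Lapp]
      exact (hm.1 v).map_add x y
    · intro c x; ext v
      simp only [LinearMap.smul_apply, Lapp]
      exact (hm.1 v).map_smul c x
  · constructor
    · intro y; constructor
      · intro x x'; ext v
        simp only [LinearMap.add_apply, Rapp]
        exact (hbr.2.1 v y).map_add x x'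
      · intro c x; ext v
        simp only [LinearMap.smul_apply, Rapp]
        exact (hbr.2.1 v y).map_smul c x
    · intro x; constructor
      · intro y y'; ext v
        simp only [LinearMap.add_apply, Rapp]
        exact (hbr.2.2 v x).map_add y y'
      · intro c y; ext v
        simp only [LinearMap.smul_apply, Rapp]
        exact (hbr.2.2 v x).map_smul c y
  · -- R1
    intro x y z; ext w
    have h1 := P1 x y w z
    simp only [LinearMap.add_apply, LinearMap.sub_apply, Module.End.mul_apply,
      LinearMap.zero_apply, Lapp, Rapp]
    calc _ = br w (preC m x y) z - br (m y w) x z + br (m x w) y z := by abel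
    _ = 0 := h1
  · -- R2
    intro x y z; ext w
    simp only [LinearMap.add_apply, LinearMap.sub_apply, Module.End.mul_apply,
      LinearMap.zero_apply, Lapp, Rapp]
    rw [P2 w x y z]; abel
  · -- R3
    intro x y z; ext w
    simp only [LinearMap.sub_apply, Module.End.mul_apply, Lapp, LYDeq, subT]
    have h5 := P5 x y z w
    have e1 : m (preD m br x y z + br x y z - br y x z) w
        = m (preD m br x y z) w + m (br x y z) w - m (br y x z) w := by
      rw [msub1, show m (preD m br x y z + br x y z) w = m (preD m br x y z) w + m (br x y z) w
        from (IsLinearMap.mk' (fun a => m a w) (hm.1 w)).map_add _ _]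
    rw [e1, h5]
  · -- R4
    intro x y z w; ext v
    have h3 := P3 v x y z w
    simp only [LinearMap.add_apply, LinearMap.sub_apply, Module.End.mul_apply,
      LinearMap.zero_apply, Lapp, Rapp, LYDeq, subT, bsub3, badd3]
    calc _ = br (br v x y) z w - br (br v x z) y w - br v x (preD m br y z w)
        - br v x (br y z w) + br v x (br z y w) + preD m br y z (br v x w) := by abel
    _ = 0 := h3
  · -- R5
    intro x y z w; ext v
    have h4 := P4 x y v z w
    simp only [LinearMap.add_apply, LinearMap.sub_apply, Module.End.mul_apply,
      Lapp, Rapp, LYDeq, subT, bsub3, badd3, bsub2, badd2]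
    rw [← sub_eq_zero] at h4 ⊢
    calc _ = br v (preD m br x y z) w + br v (br x y z) w - br v (br y x z) w
        + br v z (preD m br x y w) + br v z (br x y w) - br v z (br y x w)
        - (preD m br x y (br v z w) - br (preD m br x y v) z w) := by abel
    _ = 0 := h4
  · exact ⟨fun _ _ => rfl, fun _ _ => rfl⟩
  · intro u v
    simp only [id_eq, Lapp, preC]
  · intro u v w
    simp only [id_eq, Rapp, LYDeq, subT]
end

section
/- Let T: V→g be a relative Rota-Baxter operator on a Lie-Yamaguti algebra (g,[·,·],⟨·,·,·⟩) with respect to a representation (V;ρ,μ). Define u*v := ρ(Tu)v and {u,v,w} := μ(Tv,Tw)u for all u,v,w in V. Then (V,*,{·,·,·}) is a pre-Lie-Yamaguti algebra. -/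
/-- a relative Rota-Baxter operator induces a pre-Lie-Yamaguti algebra
structure on `V`. -/
theorem statement10 (K g V : Type*) [Field K] [CharZero K] [AddCommGroup g] [Module K g]
    [AddCommGroup V] [Module K V]
    (b : g → g → g) (t : g → g → g → g) (h : IsLieYamaguti K b t)
    (ρ : g → Module.End K V) (μ : g → g → Module.End K V)
    (hrep : IsLYRep K b t ρ μ) (T : V → g) (hT : IsRelRB K b t ρ μ T) :
    IsPreLY K (fun u v => ρ (T u) v) (fun u v w => μ (T v) (T w) u) := by
  obtain ⟨hTlin, hRB1, hRB2⟩ := hT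
  obtain ⟨hρ, hμ, hR1, hR2, hR3, hR4, hR5⟩ := hrep
  have Tsub : ∀ a c : V, T (a - c) = T a - T c := fun a c => by
    simpa using (IsLinearMap.mk' T hTlin).map_sub a c
  have Tcomb : ∀ p q s : V, T (p + q - s) = T p + T q - T s := fun p q s => by
    rw [Tsub, hTlin.map_add]
  have ρsub : ∀ a c : g, ρ (a - c) = ρ a - ρ c := fun a c => by
    simpa using (IsLinearMap.mk' ρ hρ).map_sub a c
  have ρcomb : ∀ a c s : g, ρ (a + c - s) = ρ a + ρ c - ρ s := fun a c s => by
    rw [ρsub, hρ.map_add]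
  have μcomb1 : ∀ (a c s e : g), μ (a + c - s) e = μ a e + μ c e - μ s e := fun a c s e => by
    have h1 := (IsLinearMap.mk' (fun x => μ x e) (hμ.1 e)).map_sub (a + c) s
    simp only [IsLinearMap.mk'_apply] at h1
    rw [h1, (hμ.1 e).map_add]
  have μcomb2 : ∀ (e a c s : g), μ e (a + c - s) = μ e a + μ e c - μ e s := fun e a c s => by
    have h1 := (IsLinearMap.mk' (fun x => μ e x) (hμ.2 e)).map_sub (a + c) s
    simp only [IsLinearMap.mk'_apply] at h1
    rw [h1, (hμ.2 e).map_add]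
  set m : V → V → V := fun u v => ρ (T u) v with hm
  set br : V → V → V → V := fun u v w => μ (T v) (T w) u with hbr
  have hTC : ∀ u v, T (preC m u v) = b (T u) (T v) := fun u v => (hRB1 u v).symm
  have hpreD : ∀ u v w : V, preD m br u v w = LYD K b ρ μ (T u) (T v) w := by
    intro u v w
    have h1 : T (ρ (T v) u) = T (ρ (T u) v) - b (T u) (T v) := by
      rw [hRB1, ← Tsub]
      congr 1
      abel
    show μ (T v) (T u) w - μ (T u) (T v) w
        + (ρ (T (ρ (T v) u)) w - ρ (T v) (ρ (T u) w))
        - (ρ (T (ρ (T u) v)) w - ρ (T u) (ρ (T v) w)) = _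
    rw [h1, ρsub]
    simp only [LYD, LinearMap.sub_apply, LinearMap.add_apply, Module.End.mul_apply]
    abel
  have hsubT : ∀ u v w : V, T (subT m br u v w) = t (T u) (T v) (T w) := by
    intro u v w
    rw [hRB2 u v w]
    congr 1
    show preD m br u v w + br u v w - br v u w = _
    rw [hpreD]
  refine ⟨⟨?_, ?_⟩, ⟨?_, ?_, ?_⟩, ?_, ?_, ?_, ?_, ?_⟩
  · intro y
    constructor
    · intro a c
      show ρ (T (a + c)) y = ρ (T a) y + ρ (T c) y
      rw [hTlin.map_add, hρ.map_add, LinearMap.add_apply]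
    · intro k a
      show ρ (T (k • a)) y = k • ρ (T a) y
      rw [hTlin.map_smul, hρ.map_smul, LinearMap.smul_apply]
  · exact fun x => (ρ (T x)).isLinear
  · exact fun y z => (μ (T y) (T z)).isLinear
  · intro x z
    constructor
    · intro a c
      show μ (T (a + c)) (T z) x = μ (T a) (T z) x + μ (T c) (T z) x
      rw [hTlin.map_add, (hμ.1 (T z)).map_add, LinearMap.add_apply]
    · intro k a
      show μ (T (k • a)) (T z) x = k • μ (T a) (T z) x
      rw [hTlin.map_smul, (hμ.1 (T z)).map_smul, LinearMap.smul_apply]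
  · intro x y
    constructor
    · intro a c
      show μ (T y) (T (a + c)) x = μ (T y) (T a) x + μ (T y) (T c) x
      rw [hTlin.map_add, (hμ.2 (T y)).map_add, LinearMap.add_apply]
    · intro k a
      show μ (T y) (T (k • a)) x = k • μ (T y) (T a) x
      rw [hTlin.map_smul, (hμ.2 (T y)).map_smul, LinearMap.smul_apply]
  · -- (P1)
    intro x y z w
    have h0 := congrArg (fun f : Module.End K V => f z) (hR1 (T x) (T y) (T w))
    simp only [LinearMap.sub_apply, LinearMap.add_apply, Module.End.mul_apply,
      LinearMap.zero_apply] at h0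
    show μ (T (preC m x y)) (T w) z - μ (T x) (T w) (ρ (T y) z)
        + μ (T y) (T w) (ρ (T x) z) = 0
    rw [hTC]
    exact h0
  · -- (P2)
    intro x y z w
    have h0 := congrArg (fun f : Module.End K V => f x) (hR2 (T y) (T z) (T w))
    simp only [LinearMap.sub_apply, LinearMap.add_apply, Module.End.mul_apply,
      LinearMap.zero_apply] at h0
    show μ (T y) (T (preC m z w)) x
        = ρ (T z) (μ (T y) (T w) x) - ρ (T w) (μ (T y) (T z) x)
    rw [hTC z w, ← sub_eq_zero, ← h0]
    abel
  · -- (P3)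
    intro x y z w r
    have h0 := congrArg (fun f : Module.End K V => f x) (hR4 (T y) (T z) (T w) (T r))
    simp only [LinearMap.sub_apply, LinearMap.add_apply, Module.End.mul_apply,
      LinearMap.zero_apply] at h0
    have hM : μ (T y) (t (T z) (T w) (T r)) x
        = μ (T y) (T (preD m br z w r)) x + μ (T y) (T (br z w r)) x
          - μ (T y) (T (br w z r)) x := by
      rw [← hsubT]
      show μ (T y) (T (preD m br z w r + br z w r - br w z r)) x = _
      rw [Tcomb, μcomb2]
      simp only [LinearMap.sub_apply, LinearMap.add_apply]
    rw [hM] at h0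
    show μ (T w) (T r) (μ (T y) (T z) x) - μ (T z) (T r) (μ (T y) (T w) x)
        - μ (T y) (T (preD m br z w r)) x - μ (T y) (T (br z w r)) x
        + μ (T y) (T (br w z r)) x
        + preD m br z w (μ (T y) (T r) x) = 0
    rw [hpreD z w (μ (T y) (T r) x), ← h0]
    abel
  · -- (P4)
    intro x y z w r
    have h0 := congrArg (fun f : Module.End K V => f z) (hR5 (T x) (T y) (T w) (T r))
    simp only [LinearMap.sub_apply, LinearMap.add_apply, Module.End.mul_apply,
      LinearMap.zero_apply] at h0
    have hM1 : μ (t (T x) (T y) (T w)) (T r) z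
        = μ (T (preD m br x y w)) (T r) z + μ (T (br x y w)) (T r) z
          - μ (T (br y x w)) (T r) z := by
      rw [← hsubT]
      show μ (T (preD m br x y w + br x y w - br y x w)) (T r) z = _
      rw [Tcomb, μcomb1]
      simp only [LinearMap.sub_apply, LinearMap.add_apply]
    have hM2 : μ (T w) (t (T x) (T y) (T r)) z
        = μ (T w) (T (preD m br x y r)) z + μ (T w) (T (br x y r)) z
          - μ (T w) (T (br y x r)) z := by
      rw [← hsubT]
      show μ (T w) (T (preD m br x y r + br x y r - br y x r)) z = _
      rw [Tcomb, μcomb2]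
      simp only [LinearMap.sub_apply, LinearMap.add_apply]
    rw [hM1, hM2] at h0
    show μ (T (preD m br x y w)) (T r) z + μ (T (br x y w)) (T r) z
        - μ (T (br y x w)) (T r) z + μ (T w) (T (preD m br x y r)) z
        + μ (T w) (T (br x y r)) z - μ (T w) (T (br y x r)) z
        = preD m br x y (μ (T w) (T r) z) - μ (T w) (T r) (preD m br x y z)
    rw [hpreD x y (μ (T w) (T r) z), hpreD x y z, ← h0]
    abel
  · -- (P5)
    intro x y z w
    have h0 := congrArg (fun f : Module.End K V => f w) (hR3 (T x) (T y) (T z))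
    simp only [LinearMap.sub_apply, LinearMap.add_apply, Module.End.mul_apply] at h0
    have hM : ρ (t (T x) (T y) (T z)) w
        = ρ (T (preD m br x y z)) w + ρ (T (br x y z)) w - ρ (T (br y x z)) w := by
      rw [← hsubT]
      show ρ (T (preD m br x y z + br x y z - br y x z)) w = _
      rw [Tcomb, ρcomb]
      simp only [LinearMap.sub_apply, LinearMap.add_apply]
    rw [hM] at h0
    show ρ (T (preD m br x y z)) w + ρ (T (br x y z)) w - ρ (T (br y x z)) w
        = preD m br x y (ρ (T z) w) - ρ (T z) (preD m br x y w)
    rw [hpreD x y (ρ (T z) w), hpreD x y w]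
    exact h0
end

section
/- Let T: V→g be a relative Rota-Baxter operator on a Lie-Yamaguti algebra (g,[·,·],⟨·,·,·⟩) with respect to a representation (V;ρ,μ), and let D(x,y):=μ(y,x)−μ(x,y)+ρ(x)ρ(y)−ρ(y)ρ(x)−ρ([x,y]). Define on V the brackets [u,v]_C := ρ(Tu)v−ρ(Tv)u and ⟨u,v,w⟩_C := D(Tu,Tv)w+μ(Tv,Tw)u−μ(Tu,Tw)v. Then (V,[·,·]_C,⟨·,·,·⟩_C) is a Lie-Yamaguti algebra and T is a homomorphism of Lie-Yamaguti algebras from (V,[·,·]_C,⟨·,·,·⟩_C) to (g,[·,·],⟨·,·,·⟩), i.e., T([u,v]_C)=[Tu,Tv] and T(⟨u,v,w⟩_C)=⟨Tu,Tv,Tw⟩ for all u,v,w in V. -/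
private lemma hlp1 {M : Type*} [AddCommGroup M] {a c d : M} (h : a - c + d = 0) :
    a = c - d := by
  have h2 : a - (c - d) = a - c + d := by abel
  rw [← sub_eq_zero, h2, h]

private lemma hlp2 {M : Type*} [AddCommGroup M] {A B C E : M} (h : A - B - C + E = 0) :
    C = A - B + E := by
  have h2 : C - (A - B + E) = -(A - B - C + E) := by abel
  rw [← sub_eq_zero, h2, h, neg_zero]

private lemma hlp3 {M : Type*} [AddCommGroup M] {A B C : M} (h : A + B + C = 0) :
    A = -B - C := by
  have h2 : A - (-B - C) = A + B + C := by abel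
  rw [← sub_eq_zero, h2, h]

private lemma Dskew {K g V : Type*} [Field K] [CharZero K] [AddCommGroup g] [Module K g]
    [AddCommGroup V] [Module K V] (b : g → g → g)
    (ρ : g → Module.End K V) (μ : g → g → Module.End K V)
    (hρ : IsLinearMap K ρ) (hbskew : ∀ x y, b x y = - b y x) (x y : g) :
    LYD K b ρ μ x y = - LYD K b ρ μ y x := by
  have hb : ρ (b x y) = - ρ (b y x) := by rw [hbskew x y, hρ.map_neg]
  show μ y x - μ x y + ρ x * ρ y - ρ y * ρ x - ρ (b x y)
      = -(μ x y - μ y x + ρ y * ρ x - ρ x * ρ y - ρ (b y x))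
  rw [hb]; abel

private lemma sumD (K : Type*) {g V : Type*} [Field K] [CharZero K] [AddCommGroup g]
    [Module K g] [AddCommGroup V] [Module K V]
    (b : g → g → g) (t : g → g → g → g)
    (ρ : g → Module.End K V) (μ : g → g → Module.End K V)
    (h : IsLieYamaguti K b t) (hrep : IsLYRep K b t ρ μ) (x y z : g) :
    LYD K b ρ μ (b x y) z + LYD K b ρ μ (b y z) x + LYD K b ρ μ (b z x) y = 0 := by
  obtain ⟨hρ, hμ, hR1, hR2, hR3, hR4, hR5⟩ := hrep
  have hLY1 := h.2.2.2.2.1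
  have e1 := hlp1 (hR1 x y z)
  have e2 := hlp1 (hR1 y z x)
  have e3 := hlp1 (hR1 z x y)
  have f1 := hlp1 (hR2 z x y)
  have f2 := hlp1 (hR2 x y z)
  have f3 := hlp1 (hR2 y z x)
  have hsum : b (b x y) z + b (b y z) x + b (b z x) y = -(t x y z + t y z x + t z x y) := by
    have h1 := hLY1 x y z
    have h2 : b (b x y) z + b (b y z) x + b (b z x) y - -(t x y z + t y z x + t z x y)
        = b (b x y) z + b (b y z) x + b (b z x) y + t x y z + t y z x + t z x y := by abel
    rw [← sub_eq_zero, h2, h1]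
  have g0 : ρ (b (b x y) z) + ρ (b (b y z) x) + ρ (b (b z x) y)
      = -(ρ (t x y z) + ρ (t y z x) + ρ (t z x y)) := by
    rw [← hρ.map_add, ← hρ.map_add, hsum, hρ.map_neg, hρ.map_add, hρ.map_add]
  have g1 : ρ (b (b x y) z)
      = -(ρ (t x y z) + ρ (t y z x) + ρ (t z x y)) - ρ (b (b y z) x) - ρ (b (b z x) y) := by
    rw [← g0]; abel
  have u1 : LYD K b ρ μ (b x y) z
      = μ z (b x y) - μ (b x y) z + ρ (b x y) * ρ z - ρ z * ρ (b x y) - ρ (b (b x y) z) := rfl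
  have u2 : LYD K b ρ μ (b y z) x
      = μ x (b y z) - μ (b y z) x + ρ (b y z) * ρ x - ρ x * ρ (b y z) - ρ (b (b y z) x) := rfl
  have u3 : LYD K b ρ μ (b z x) y
      = μ y (b z x) - μ (b z x) y + ρ (b z x) * ρ y - ρ y * ρ (b z x) - ρ (b (b z x) y) := rfl
  have w1 : LYD K b ρ μ x y = μ y x - μ x y + ρ x * ρ y - ρ y * ρ x - ρ (b x y) := rfl
  have w2 : LYD K b ρ μ y z = μ z y - μ y z + ρ y * ρ z - ρ z * ρ y - ρ (b y z) := rfl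
  have w3 : LYD K b ρ μ z x = μ x z - μ z x + ρ z * ρ x - ρ x * ρ z - ρ (b z x) := rfl
  rw [u1, u2, u3, g1, hR3 x y z, hR3 y z x, hR3 z x y, e1, e2, e3, f1, f2, f3, w1, w2, w3]
  noncomm_ring

private lemma LDlem (K : Type*) {g V : Type*} [Field K] [CharZero K] [AddCommGroup g]
    [Module K g] [AddCommGroup V] [Module K V]
    (b : g → g → g) (t : g → g → g → g)
    (ρ : g → Module.End K V) (μ : g → g → Module.End K V)
    (h : IsLieYamaguti K b t) (hrep : IsLYRep K b t ρ μ) (x y z a : g) :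
    LYD K b ρ μ x y * LYD K b ρ μ z a - LYD K b ρ μ z a * LYD K b ρ μ x y
      = LYD K b ρ μ (t x y z) a + LYD K b ρ μ z (t x y a) := by
  obtain ⟨hρ, hμ, hR1, hR2, hR3, hR4, hR5⟩ := hrep
  have hLY3 := h.2.2.2.2.2.2.1
  have hB : ρ (b (t x y z) a) + ρ (b z (t x y a))
      = LYD K b ρ μ x y * ρ (b z a) - ρ (b z a) * LYD K b ρ μ x y := by
    rw [← hρ.map_add, ← hLY3 x y z a, hR3]
  have e1 := eq_sub_of_add_eq (hR5 x y z a)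
  have e2 := eq_sub_of_add_eq (hR5 x y a z)
  have e3 := eq_sub_of_add_eq hB
  have u1 : LYD K b ρ μ (t x y z) a
      = μ a (t x y z) - μ (t x y z) a + ρ (t x y z) * ρ a - ρ a * ρ (t x y z)
        - ρ (b (t x y z) a) := rfl
  have u2 : LYD K b ρ μ z (t x y a)
      = μ (t x y a) z - μ z (t x y a) + ρ z * ρ (t x y a) - ρ (t x y a) * ρ z
        - ρ (b z (t x y a)) := rfl
  have u3 : LYD K b ρ μ z a = μ a z - μ z a + ρ z * ρ a - ρ a * ρ z - ρ (b z a) := rfl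
  rw [u1, u2, e1, e2, e3, hR3 x y z, hR3 x y a, u3]
  noncomm_ring

/-- the induced brackets on `V` form a Lie-Yamaguti algebra and `T` is a
homomorphism to `g`. -/
theorem statement11 (K g V : Type*) [Field K] [CharZero K] [AddCommGroup g] [Module K g]
    [AddCommGroup V] [Module K V]
    (b : g → g → g) (t : g → g → g → g) (h : IsLieYamaguti K b t)
    (ρ : g → Module.End K V) (μ : g → g → Module.End K V)
    (hrep : IsLYRep K b t ρ μ) (T : V → g) (hT : IsRelRB K b t ρ μ T) :
    IsLieYamaguti K (fun u v => ρ (T u) v - ρ (T v) u)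
      (fun u v w => LYD K b ρ μ (T u) (T v) w + μ (T v) (T w) u - μ (T u) (T w) v) ∧
    (∀ u v, T (ρ (T u) v - ρ (T v) u) = b (T u) (T v)) ∧
    (∀ u v w,
        T (LYD K b ρ μ (T u) (T v) w + μ (T v) (T w) u - μ (T u) (T w) v)
          = t (T u) (T v) (T w)) := by
  have hρ := hrep.1
  have hμ := hrep.2.1
  have hR1 := hrep.2.2.1
  have hR2 := hrep.2.2.2.1
  have hR3 := hrep.2.2.2.2.1
  have hR4 := hrep.2.2.2.2.2.1
  have hR5 := hrep.2.2.2.2.2.2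
  have hbbilin := h.1
  have hbskew := h.2.2.1
  have hTlin := hT.1
  have hRB2 := hT.2.1
  have hRB3 := hT.2.2
  -- beta reduced linearity facts
  have mAddL : ∀ p q r, μ (p + q) r = μ p r + μ q r := fun p q r => (hμ.1 r).map_add p q
  have mSmulL : ∀ (c : K) p r, μ (c • p) r = c • μ p r := fun c p r => (hμ.1 r).map_smul c p
  have mAddR : ∀ p q r, μ p (q + r) = μ p q + μ p r := fun p q r => (hμ.2 p).map_add q r
  have mSmulR : ∀ (c : K) p r, μ p (c • r) = c • μ p r := fun c p r => (hμ.2 p).map_smul c r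
  have bAddL : ∀ p q r, b (p + q) r = b p r + b q r := fun p q r => (hbbilin.1 r).map_add p q
  have bSmulL : ∀ (c : K) p r, b (c • p) r = c • b p r := fun c p r => (hbbilin.1 r).map_smul c p
  have bAddR : ∀ p q r, b p (q + r) = b p q + b p r := fun p q r => (hbbilin.2 p).map_add q r
  have bSmulR : ∀ (c : K) p r, b p (c • r) = c • b p r := fun c p r => (hbbilin.2 p).map_smul c r
  have DaddL : ∀ p p' q, LYD K b ρ μ (p + p') q = LYD K b ρ μ p q + LYD K b ρ μ p' q := by
    intro p p' q
    show μ q (p + p') - μ (p + p') q + ρ (p + p') * ρ q - ρ q * ρ (p + p') - ρ (b (p + p') q)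
        = _
    rw [mAddR, mAddL, hρ.map_add, bAddL, hρ.map_add, add_mul, mul_add]
    show _ = (μ q p - μ p q + ρ p * ρ q - ρ q * ρ p - ρ (b p q))
        + (μ q p' - μ p' q + ρ p' * ρ q - ρ q * ρ p' - ρ (b p' q))
    abel
  have DsmulL : ∀ (c : K) p q, LYD K b ρ μ (c • p) q = c • LYD K b ρ μ p q := by
    intro c p q
    show μ q (c • p) - μ (c • p) q + ρ (c • p) * ρ q - ρ q * ρ (c • p) - ρ (b (c • p) q) = _
    rw [mSmulR, mSmulL, hρ.map_smul, bSmulL, hρ.map_smul, smul_mul_assoc, mul_smul_comm]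
    show _ = c • (μ q p - μ p q + ρ p * ρ q - ρ q * ρ p - ρ (b p q))
    module
  have DaddR : ∀ p q q', LYD K b ρ μ p (q + q') = LYD K b ρ μ p q + LYD K b ρ μ p q' := by
    intro p q q'
    show μ (q + q') p - μ p (q + q') + ρ p * ρ (q + q') - ρ (q + q') * ρ p - ρ (b p (q + q'))
        = _
    rw [mAddL, mAddR, hρ.map_add, bAddR, hρ.map_add, add_mul, mul_add]
    show _ = (μ q p - μ p q + ρ p * ρ q - ρ q * ρ p - ρ (b p q))
        + (μ q' p - μ p q' + ρ p * ρ q' - ρ q' * ρ p - ρ (b p q'))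
    abel
  have DsmulR : ∀ (c : K) p q, LYD K b ρ μ p (c • q) = c • LYD K b ρ μ p q := by
    intro c p q
    show μ (c • q) p - μ p (c • q) + ρ p * ρ (c • q) - ρ (c • q) * ρ p - ρ (b p (c • q)) = _
    rw [mSmulL, mSmulR, hρ.map_smul, bSmulR, hρ.map_smul, smul_mul_assoc, mul_smul_comm]
    show _ = c • (μ q p - μ p q + ρ p * ρ q - ρ q * ρ p - ρ (b p q))
    module
  refine ⟨⟨?_, ?_, ?_, ?_, ?_, ?_, ?_, ?_⟩, fun u v => (hRB2 u v).symm,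
    fun u v w => (hRB3 u v w).symm⟩
  · -- bilinearity of the binary bracket
    constructor
    · intro v
      constructor
      · intro u1 u2
        show ρ (T (u1 + u2)) v - ρ (T v) (u1 + u2)
            = (ρ (T u1) v - ρ (T v) u1) + (ρ (T u2) v - ρ (T v) u2)
        rw [hTlin.map_add, hρ.map_add]
        simp only [LinearMap.add_apply, map_add]
        abel
      · intro c u
        show ρ (T (c • u)) v - ρ (T v) (c • u) = c • (ρ (T u) v - ρ (T v) u)
        rw [hTlin.map_smul, hρ.map_smul]
        simp only [LinearMap.smul_apply, map_smul]
        module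
    · intro u
      constructor
      · intro v1 v2
        show ρ (T u) (v1 + v2) - ρ (T (v1 + v2)) u
            = (ρ (T u) v1 - ρ (T v1) u) + (ρ (T u) v2 - ρ (T v2) u)
        rw [hTlin.map_add, hρ.map_add]
        simp only [LinearMap.add_apply, map_add]
        abel
      · intro c v
        show ρ (T u) (c • v) - ρ (T (c • v)) u = c • (ρ (T u) v - ρ (T v) u)
        rw [hTlin.map_smul, hρ.map_smul]
        simp only [LinearMap.smul_apply, map_smul]
        module
  · -- trilinearity of the ternary bracket
    refine ⟨fun v w => ⟨fun u1 u2 => ?_, fun c u => ?_⟩,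
        fun u w => ⟨fun v1 v2 => ?_, fun c v => ?_⟩,
        fun u v => ⟨fun w1 w2 => ?_, fun c w => ?_⟩⟩
    · show LYD K b ρ μ (T (u1 + u2)) (T v) w + μ (T v) (T w) (u1 + u2)
          - μ (T (u1 + u2)) (T w) v
          = (LYD K b ρ μ (T u1) (T v) w + μ (T v) (T w) u1 - μ (T u1) (T w) v)
            + (LYD K b ρ μ (T u2) (T v) w + μ (T v) (T w) u2 - μ (T u2) (T w) v)
      rw [hTlin.map_add, DaddL, mAddL]
      simp only [LinearMap.add_apply, map_add]
      abel
    · show LYD K b ρ μ (T (c • u)) (T v) w + μ (T v) (T w) (c • u) - μ (T (c • u)) (T w) v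
          = c • (LYD K b ρ μ (T u) (T v) w + μ (T v) (T w) u - μ (T u) (T w) v)
      rw [hTlin.map_smul, DsmulL, mSmulL]
      simp only [LinearMap.smul_apply, map_smul]
      module
    · show LYD K b ρ μ (T u) (T (v1 + v2)) w + μ (T (v1 + v2)) (T w) u
          - μ (T u) (T w) (v1 + v2)
          = (LYD K b ρ μ (T u) (T v1) w + μ (T v1) (T w) u - μ (T u) (T w) v1)
            + (LYD K b ρ μ (T u) (T v2) w + μ (T v2) (T w) u - μ (T u) (T w) v2)
      rw [hTlin.map_add, DaddR, mAddL]
      simp only [LinearMap.add_apply, map_add]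
      abel
    · show LYD K b ρ μ (T u) (T (c • v)) w + μ (T (c • v)) (T w) u - μ (T u) (T w) (c • v)
          = c • (LYD K b ρ μ (T u) (T v) w + μ (T v) (T w) u - μ (T u) (T w) v)
      rw [hTlin.map_smul, DsmulR, mSmulL]
      simp only [LinearMap.smul_apply, map_smul]
      module
    · show LYD K b ρ μ (T u) (T v) (w1 + w2) + μ (T v) (T (w1 + w2)) u
          - μ (T u) (T (w1 + w2)) v
          = (LYD K b ρ μ (T u) (T v) w1 + μ (T v) (T w1) u - μ (T u) (T w1) v)
            + (LYD K b ρ μ (T u) (T v) w2 + μ (T v) (T w2) u - μ (T u) (T w2) v)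
      rw [hTlin.map_add, mAddR, mAddR, map_add]
      simp only [LinearMap.add_apply]
      abel
    · show LYD K b ρ μ (T u) (T v) (c • w) + μ (T v) (T (c • w)) u - μ (T u) (T (c • w)) v
          = c • (LYD K b ρ μ (T u) (T v) w + μ (T v) (T w) u - μ (T u) (T w) v)
      rw [hTlin.map_smul, mSmulR, mSmulR, map_smul]
      simp only [LinearMap.smul_apply]
      module
  · -- skew-symmetry of the binary bracket
    intro u v
    show ρ (T u) v - ρ (T v) u = -(ρ (T v) u - ρ (T u) v)
    abel
  · -- skew-symmetry of the ternary bracket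
    intro u v w
    show LYD K b ρ μ (T u) (T v) w + μ (T v) (T w) u - μ (T u) (T w) v
        = -(LYD K b ρ μ (T v) (T u) w + μ (T u) (T w) v - μ (T v) (T w) u)
    rw [Dskew b ρ μ hρ hbskew (T u) (T v)]
    simp only [LinearMap.neg_apply]
    abel
  · -- LY1
    intro u v w
    simp only [← hRB2]
    show ρ (b (T u) (T v)) w - ρ (T w) (ρ (T u) v - ρ (T v) u)
        + (ρ (b (T v) (T w)) u - ρ (T u) (ρ (T v) w - ρ (T w) v))
        + (ρ (b (T w) (T u)) v - ρ (T v) (ρ (T w) u - ρ (T u) w))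
        + (LYD K b ρ μ (T u) (T v) w + μ (T v) (T w) u - μ (T u) (T w) v)
        + (LYD K b ρ μ (T v) (T w) u + μ (T w) (T u) v - μ (T v) (T u) w)
        + (LYD K b ρ μ (T w) (T u) v + μ (T u) (T v) w - μ (T w) (T v) u) = 0
    simp only [LYD, LinearMap.sub_apply, LinearMap.add_apply, Module.End.mul_apply, map_sub]
    abel
  · -- LY2
    intro u v w s
    simp only [← hRB2]
    have H0 := LinearMap.congr_fun (sumD K b t ρ μ h hrep (T u) (T v) (T w)) s
    simp only [LinearMap.add_apply, LinearMap.zero_apply] at H0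
    have Hs := hlp3 H0
    have E1 : μ (b (T u) (T v)) (T s) w
        = μ (T u) (T s) (ρ (T v) w) - μ (T v) (T s) (ρ (T u) w) := by
      have := LinearMap.congr_fun (hlp1 (hR1 (T u) (T v) (T s))) w
      simpa only [LinearMap.sub_apply, Module.End.mul_apply] using this
    have E2 : μ (b (T v) (T w)) (T s) u
        = μ (T v) (T s) (ρ (T w) u) - μ (T w) (T s) (ρ (T v) u) := by
      have := LinearMap.congr_fun (hlp1 (hR1 (T v) (T w) (T s))) u
      simpa only [LinearMap.sub_apply, Module.End.mul_apply] using this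
    have E3 : μ (b (T w) (T u)) (T s) v
        = μ (T w) (T s) (ρ (T u) v) - μ (T u) (T s) (ρ (T w) v) := by
      have := LinearMap.congr_fun (hlp1 (hR1 (T w) (T u) (T s))) v
      simpa only [LinearMap.sub_apply, Module.End.mul_apply] using this
    show LYD K b ρ μ (b (T u) (T v)) (T w) s + μ (T w) (T s) (ρ (T u) v - ρ (T v) u)
        - μ (b (T u) (T v)) (T s) w
        + (LYD K b ρ μ (b (T v) (T w)) (T u) s + μ (T u) (T s) (ρ (T v) w - ρ (T w) v)
          - μ (b (T v) (T w)) (T s) u)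
        + (LYD K b ρ μ (b (T w) (T u)) (T v) s + μ (T v) (T s) (ρ (T w) u - ρ (T u) w)
          - μ (b (T w) (T u)) (T s) v) = 0
    rw [Hs, E1, E2, E3]
    simp only [map_sub]
    abel
  · -- LY3
    intro u v w s
    simp only [← hRB2, ← hRB3]
    have G1 : ρ (t (T u) (T v) (T w)) s
        = LYD K b ρ μ (T u) (T v) (ρ (T w) s) - ρ (T w) (LYD K b ρ μ (T u) (T v) s) := by
      have := LinearMap.congr_fun (hR3 (T u) (T v) (T w)) s
      simpa only [LinearMap.sub_apply, Module.End.mul_apply] using this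
    have G2 : ρ (t (T u) (T v) (T s)) w
        = LYD K b ρ μ (T u) (T v) (ρ (T s) w) - ρ (T s) (LYD K b ρ μ (T u) (T v) w) := by
      have := LinearMap.congr_fun (hR3 (T u) (T v) (T s)) w
      simpa only [LinearMap.sub_apply, Module.End.mul_apply] using this
    have G3 : μ (T v) (b (T w) (T s)) u
        = ρ (T w) (μ (T v) (T s) u) - ρ (T s) (μ (T v) (T w) u) := by
      have := LinearMap.congr_fun (hlp1 (hR2 (T v) (T w) (T s))) u
      simpa only [LinearMap.sub_apply, Module.End.mul_apply] using this
    have G4 : μ (T u) (b (T w) (T s)) v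
        = ρ (T w) (μ (T u) (T s) v) - ρ (T s) (μ (T u) (T w) v) := by
      have := LinearMap.congr_fun (hlp1 (hR2 (T u) (T w) (T s))) v
      simpa only [LinearMap.sub_apply, Module.End.mul_apply] using this
    show LYD K b ρ μ (T u) (T v) (ρ (T w) s - ρ (T s) w) + μ (T v) (b (T w) (T s)) u
        - μ (T u) (b (T w) (T s)) v
        = (ρ (t (T u) (T v) (T w)) s
            - ρ (T s) (LYD K b ρ μ (T u) (T v) w + μ (T v) (T w) u - μ (T u) (T w) v))
          + (ρ (T w) (LYD K b ρ μ (T u) (T v) s + μ (T v) (T s) u - μ (T u) (T s) v)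
            - ρ (t (T u) (T v) (T s)) w)
    rw [G1, G2, G3, G4]
    simp only [map_sub, map_add]
    abel
  · -- LY4
    intro u v w s q
    simp only [← hRB3]
    have F1 : LYD K b ρ μ (t (T u) (T v) (T w)) (T s) q
        = LYD K b ρ μ (T u) (T v) (LYD K b ρ μ (T w) (T s) q)
          - LYD K b ρ μ (T w) (T s) (LYD K b ρ μ (T u) (T v) q)
          - LYD K b ρ μ (T w) (t (T u) (T v) (T s)) q := by
      have h0 := LinearMap.congr_fun (LDlem K b t ρ μ h hrep (T u) (T v) (T w) (T s)) q
      simp only [LinearMap.sub_apply, LinearMap.add_apply, Module.End.mul_apply] at h0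
      exact eq_sub_of_add_eq h0.symm
    have F2 : μ (t (T u) (T v) (T w)) (T q) s
        = LYD K b ρ μ (T u) (T v) (μ (T w) (T q) s)
          - μ (T w) (T q) (LYD K b ρ μ (T u) (T v) s)
          - μ (T w) (t (T u) (T v) (T q)) s := by
      have h0 := LinearMap.congr_fun (hR5 (T u) (T v) (T w) (T q)) s
      simp only [LinearMap.sub_apply, LinearMap.add_apply, Module.End.mul_apply] at h0
      exact eq_sub_of_add_eq h0
    have F3 : μ (t (T u) (T v) (T s)) (T q) w
        = LYD K b ρ μ (T u) (T v) (μ (T s) (T q) w)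
          - μ (T s) (T q) (LYD K b ρ μ (T u) (T v) w)
          - μ (T s) (t (T u) (T v) (T q)) w := by
      have h0 := LinearMap.congr_fun (hR5 (T u) (T v) (T s) (T q)) w
      simp only [LinearMap.sub_apply, LinearMap.add_apply, Module.End.mul_apply] at h0
      exact eq_sub_of_add_eq h0
    have F4 : μ (T v) (t (T w) (T s) (T q)) u
        = μ (T s) (T q) (μ (T v) (T w) u) - μ (T w) (T q) (μ (T v) (T s) u)
          + LYD K b ρ μ (T w) (T s) (μ (T v) (T q) u) := by
      have := LinearMap.congr_fun (hlp2 (hR4 (T v) (T w) (T s) (T q))) u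
      simpa only [LinearMap.sub_apply, LinearMap.add_apply, Module.End.mul_apply] using this
    have F5 : μ (T u) (t (T w) (T s) (T q)) v
        = μ (T s) (T q) (μ (T u) (T w) v) - μ (T w) (T q) (μ (T u) (T s) v)
          + LYD K b ρ μ (T w) (T s) (μ (T u) (T q) v) := by
      have := LinearMap.congr_fun (hlp2 (hR4 (T u) (T w) (T s) (T q))) v
      simpa only [LinearMap.sub_apply, LinearMap.add_apply, Module.End.mul_apply] using this
    show LYD K b ρ μ (T u) (T v)
          (LYD K b ρ μ (T w) (T s) q + μ (T s) (T q) w - μ (T w) (T q) s)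
        + μ (T v) (t (T w) (T s) (T q)) u - μ (T u) (t (T w) (T s) (T q)) v
        = (LYD K b ρ μ (t (T u) (T v) (T w)) (T s) q
            + μ (T s) (T q) (LYD K b ρ μ (T u) (T v) w + μ (T v) (T w) u - μ (T u) (T w) v)
            - μ (t (T u) (T v) (T w)) (T q) s)
          + (LYD K b ρ μ (T w) (t (T u) (T v) (T s)) q + μ (t (T u) (T v) (T s)) (T q) w
            - μ (T w) (T q)
                (LYD K b ρ μ (T u) (T v) s + μ (T v) (T s) u - μ (T u) (T s) v))
          + (LYD K b ρ μ (T w) (T s)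
                (LYD K b ρ μ (T u) (T v) q + μ (T v) (T q) u - μ (T u) (T q) v)
            + μ (T s) (t (T u) (T v) (T q)) w - μ (T w) (t (T u) (T v) (T q)) s)
    rw [F1, F2, F3, F4, F5]
    simp only [map_add, map_sub]
    abel
end

section
/- Let T: V→g be an invertible relative Rota-Baxter operator on a Lie-Yamaguti algebra (g,[·,·],⟨·,·,·⟩) with respect to a representation (V;ρ,μ), and let D(x,y):=μ(y,x)−μ(x,y)+ρ(x)ρ(y)−ρ(y)ρ(x)−ρ([x,y]). Define on g the operations x*y := T(ρ(x)T⁻¹(y)) and {x,y,z} := T(μ(y,z)T⁻¹(x)). Then (g,*,{·,·,·}) is a pre-Lie-Yamaguti algebra compatible with the given Lie-Yamaguti structure, i.e., for all x,y,z in g: x*y−y*x = [x,y] and {x,y,z}_D+{x,y,z}−{y,x,z} = ⟨x,y,z⟩. -/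
/-- an invertible relative Rota-Baxter operator induces a compatible
pre-Lie-Yamaguti algebra structure on `g`. -/
theorem statement12 (K g V : Type*) [Field K] [CharZero K] [AddCommGroup g] [Module K g]
    [AddCommGroup V] [Module K V]
    (b : g → g → g) (t : g → g → g → g) (h : IsLieYamaguti K b t)
    (ρ : g → Module.End K V) (μ : g → g → Module.End K V)
    (hrep : IsLYRep K b t ρ μ) (T : V → g) (hT : IsRelRB K b t ρ μ T)
    (S : g → V) (hST : Function.LeftInverse S T) (hTS : Function.RightInverse S T) :
    IsPreLY K (fun x y => T (ρ x (S y))) (fun x y z => T (μ y z (S x))) ∧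
    (∀ x y, T (ρ x (S y)) - T (ρ y (S x)) = b x y) ∧
    (∀ x y z,
        preD (fun a c => T (ρ a (S c))) (fun a c d => T (μ c d (S a))) x y z
          + T (μ y z (S x)) - T (μ x z (S y)) = t x y z) := by

  obtain ⟨hTl, hRB2, hRB3⟩ := hT
  obtain ⟨hρ, hμ, hR1, hR2, hR3, hR4, hR5⟩ := hrep
  have hTinj : Function.Injective T := hST.injective
  have hST' : ∀ v, S (T v) = v := hST
  have hTS' : ∀ x, T (S x) = x := hTS
  have hS : IsLinearMap K S := by
    constructor
    · intro a c; apply hTinj; rw [hTS', hTl.map_add, hTS', hTS']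
    · intro k a; apply hTinj; rw [hTS', hTl.map_smul, hTS']
  have hTsub : ∀ a c, T a - T c = T (a - c) := fun a c => (hTl.map_sub a c).symm
  have hTadd : ∀ a c, T a + T c = T (a + c) := fun a c => (hTl.map_add a c).symm
  have hTneg : ∀ a, -T a = T (-a) := fun a => (hTl.map_neg a).symm
  have hb' : ∀ x y, b x y = T (ρ x (S y) - ρ y (S x)) := by
    intro x y
    have h2 := hRB2 (S x) (S y)
    rw [hTS' x, hTS' y] at h2
    exact h2
  have ht' : ∀ x y z, t x y z =
      T (LYD K b ρ μ x y (S z) + μ y z (S x) - μ x z (S y)) := by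
    intro x y z
    have h3 := hRB3 (S x) (S y) (S z)
    rw [hTS' x, hTS' y, hTS' z] at h3
    exact h3
  have hbb : ∀ x y, T (ρ x (S y)) - T (ρ y (S x)) = b x y := by
    intro x y; rw [hTsub]; exact (hb' x y).symm
  have apR1 : ∀ x y z v, μ (b x y) z v - μ x z (ρ y v) + μ y z (ρ x v) = 0 := by
    intro x y z v
    have := LinearMap.congr_fun (hR1 x y z) v
    simpa only [LinearMap.sub_apply, LinearMap.add_apply, Module.End.mul_apply,
      LinearMap.zero_apply] using this
  have apR2 : ∀ x y z v, μ x (b y z) v - ρ y (μ x z v) + ρ z (μ x y v) = 0 := by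
    intro x y z v
    have := LinearMap.congr_fun (hR2 x y z) v
    simpa only [LinearMap.sub_apply, LinearMap.add_apply, Module.End.mul_apply,
      LinearMap.zero_apply] using this
  have apR3 : ∀ x y z v, ρ (t x y z) v =
      LYD K b ρ μ x y (ρ z v) - ρ z (LYD K b ρ μ x y v) := by
    intro x y z v
    have := LinearMap.congr_fun (hR3 x y z) v
    simpa only [LinearMap.sub_apply, Module.End.mul_apply] using this
  have apR4 : ∀ x y z w v, μ z w (μ x y v) - μ y w (μ x z v) - μ x (t y z w) v
      + LYD K b ρ μ y z (μ x w v) = 0 := by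
    intro x y z w v
    have := LinearMap.congr_fun (hR4 x y z w) v
    simpa only [LinearMap.sub_apply, LinearMap.add_apply, Module.End.mul_apply,
      LinearMap.zero_apply] using this
  have apR5 : ∀ x y z w v, μ (t x y z) w v + μ z (t x y w) v =
      LYD K b ρ μ x y (μ z w v) - μ z w (LYD K b ρ μ x y v) := by
    intro x y z w v
    have := LinearMap.congr_fun (hR5 x y z w) v
    simpa only [LinearMap.sub_apply, LinearMap.add_apply, Module.End.mul_apply] using this
  have hC : ∀ x y, ρ (T (ρ y (S x))) = ρ (T (ρ x (S y))) - ρ (b x y) := by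
    intro x y
    rw [← hρ.map_sub]
    congr 1
    rw [← hbb x y]; abel
  have hpreD : ∀ x y z,
      preD (fun x y => T (ρ x (S y))) (fun x y z => T (μ y z (S x))) x y z
        = T (LYD K b ρ μ x y (S z)) := by
    intro x y z
    simp only [preD, preAssoc]
    rw [hST' (ρ x (S z)), hST' (ρ y (S z))]
    simp only [hTsub, hTadd, hTneg]
    refine congrArg T ?_
    rw [LinearMap.congr_fun (hC x y) (S z)]
    simp only [LYD, LinearMap.sub_apply, LinearMap.add_apply, Module.End.mul_apply]
    abel
  have hsub : ∀ x y z,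
      preD (fun a c => T (ρ a (S c))) (fun a c d => T (μ c d (S a))) x y z
        + T (μ y z (S x)) - T (μ x z (S y)) = t x y z := by
    intro x y z
    rw [hpreD x y z, hTadd, hTsub]
    exact (ht' x y z).symm
  have hρt : ∀ u x y z, ρ (t x y z) u =
      ρ (T (LYD K b ρ μ x y (S z))) u + ρ (T (μ y z (S x))) u - ρ (T (μ x z (S y))) u := by
    intro u x y z
    rw [ht' x y z, ← hTsub, ← hTadd, hρ.map_sub, hρ.map_add]
    simp only [LinearMap.sub_apply, LinearMap.add_apply]
  have hμt1 : ∀ v u x y z, μ (t x y z) v u =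
      μ (T (LYD K b ρ μ x y (S z))) v u + μ (T (μ y z (S x))) v u
        - μ (T (μ x z (S y))) v u := by
    intro v u x y z
    rw [ht' x y z, ← hTsub, ← hTadd, (hμ.1 v).map_sub, (hμ.1 v).map_add]
    simp only [LinearMap.sub_apply, LinearMap.add_apply]
  have hμt2 : ∀ w u x y z, μ w (t x y z) u =
      μ w (T (LYD K b ρ μ x y (S z))) u + μ w (T (μ y z (S x))) u
        - μ w (T (μ x z (S y))) u := by
    intro w u x y z
    rw [ht' x y z, ← hTsub, ← hTadd, (hμ.2 w).map_sub, (hμ.2 w).map_add]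
    simp only [LinearMap.sub_apply, LinearMap.add_apply]
  refine ⟨⟨?_, ?_, ?_, ?_, ?_, ?_, ?_⟩, hbb, hsub⟩
  · -- bilinearity of m
    constructor
    · intro y
      constructor
      · intro a c; simp only [hρ.map_add, LinearMap.add_apply, hTl.map_add]
      · intro k a; simp only [hρ.map_smul, LinearMap.smul_apply, hTl.map_smul]
    · intro x
      constructor
      · intro a c; simp only [hS.map_add, map_add, hTl.map_add]
      · intro k a; simp only [hS.map_smul, map_smul, hTl.map_smul]
  · -- trilinearity of br
    refine ⟨fun y z => ⟨?_, ?_⟩, fun x z => ⟨?_, ?_⟩, fun x y => ⟨?_, ?_⟩⟩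
    · intro a c; simp only [hS.map_add, map_add, hTl.map_add]
    · intro k a; simp only [hS.map_smul, map_smul, hTl.map_smul]
    · intro a c; simp only [(hμ.1 z).map_add, LinearMap.add_apply, hTl.map_add]
    · intro k a; simp only [(hμ.1 z).map_smul, LinearMap.smul_apply, hTl.map_smul]
    · intro a c; simp only [(hμ.2 y).map_add, LinearMap.add_apply, hTl.map_add]
    · intro k a; simp only [(hμ.2 y).map_smul, LinearMap.smul_apply, hTl.map_smul]
  · -- P1
    intro x y z w
    simp only [preC]
    rw [hbb x y, hST' (ρ y (S z)), hST' (ρ x (S z))]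
    simp only [hTsub, hTadd]
    rw [apR1 x y w (S z), hTl.map_zero]
  · -- P2
    intro x y z w
    simp only [preC]
    rw [hbb z w, hST' (μ y w (S x)), hST' (μ y z (S x)), hTsub]
    refine congrArg T ?_
    rw [← sub_eq_zero, ← apR2 y z w (S x)]
    abel
  · -- P3
    intro x y z w v
    simp only []
    rw [hpreD z w v, hpreD z w (T (μ y v (S x)))]
    rw [hST' (μ y z (S x)), hST' (μ y w (S x)), hST' (μ y v (S x))]
    simp only [hTsub, hTadd, hTneg]
    rw [← hTl.map_zero]
    refine congrArg T ?_
    have h4 := apR4 y z w v (S x)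
    rw [hμt2 y (S x) z w v] at h4
    rw [← h4]; abel
  · -- P4
    intro x y z w v
    simp only []
    rw [hpreD x y w, hpreD x y v, hpreD x y z, hpreD x y (T (μ w v (S z)))]
    rw [hST' (μ w v (S z)), hST' (LYD K b ρ μ x y (S z))]
    simp only [hTsub, hTadd]
    refine congrArg T ?_
    have h5 := apR5 x y w v (S z)
    rw [hμt1 v (S z) x y w, hμt2 w (S z) x y v] at h5
    rw [← h5]; abel
  · -- P5
    intro x y z w
    simp only []
    rw [hpreD x y z, hpreD x y w, hpreD x y (T (ρ z (S w)))]
    rw [hST' (ρ z (S w)), hST' (LYD K b ρ μ x y (S w))]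
    simp only [hTsub, hTadd]
    refine congrArg T ?_
    rw [← hρt (S w) x y z]
    exact apR3 x y z (S w)
end

section
/- Let (g,[·,·],⟨·,·,·⟩) be a finite-dimensional Lie-Yamaguti algebra over a field K of characteristic 0. A Lie-Yamaguti algebra g admits a compatible pre-Lie-Yamaguti algebra structure (i.e., bilinear * and trilinear {·,·,·} making (g,*,{·,·,·}) a pre-Lie-Yamaguti algebra with x*y−y*x=[x,y] and {x,y,z}_D+{x,y,z}−{y,x,z}=⟨x,y,z⟩) if and only if there exist a representation (V;ρ,μ) of g and an invertible relative Rota-Baxter operator T: V→g on g with respect to (V;ρ,μ). -/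
universe u v

/-- a Lie-Yamaguti algebra admits a compatible pre-Lie-Yamaguti algebra
structure iff it admits an invertible relative Rota-Baxter operator with respect to some
representation. -/
theorem statement13 (K : Type u) (g : Type v) [Field K] [CharZero K]
    [AddCommGroup g] [Module K g] [FiniteDimensional K g]
    (b : g → g → g) (t : g → g → g → g) (h : IsLieYamaguti K b t) :
    (∃ (m : g → g → g) (br : g → g → g → g),
        IsPreLY K m br ∧ (∀ x y, m x y - m y x = b x y) ∧
        (∀ x y z, preD m br x y z + br x y z - br y x z = t x y z)) ↔
    (∃ (V : Type v) (instA : AddCommGroup V)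
        (instM : @Module K V _ instA.toAddCommMonoid)
        (ρ : g → @Module.End K V _ instA.toAddCommMonoid instM)
        (μ : g → g → @Module.End K V _ instA.toAddCommMonoid instM) (T : V → g),
        @IsLYRep K g V _ _ _ _ instA instM b t ρ μ ∧
        @IsRelRB K g V _ _ _ _ instA instM b t ρ μ T ∧
        Function.Bijective T) := by
  constructor
  · rintro ⟨m, br, ⟨hm, hbr, P1, P2, P3, P4, P5⟩, hcb, hct⟩
    have hL : ∀ x v, Llin K m hm x v = m x v := fun _ _ => rfl
    have hR : ∀ x y v, Rlin K br hbr x y v = br v x y := fun _ _ _ => rfl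
    have hpc : ∀ x y, preC m x y = b x y := fun x y => hcb x y
    have hD : ∀ x y v, LYD K b (Llin K m hm) (Rlin K br hbr) x y v = preD m br x y v := by
      intro x y v
      have hbv : m (b x y) v = m (m x y) v - m (m y x) v := by
        rw [← hcb x y]; exact (hm.1 v).map_sub _ _
      simp only [LYD, LinearMap.sub_apply, LinearMap.add_apply, Module.End.mul_apply,
        hL, hR, hbv, preD, preAssoc]
      abel
    refine ⟨g, inferInstance, inferInstance, Llin K m hm, Rlin K br hbr, id,
      ⟨?_, ⟨?_, ?_⟩, ?_, ?_, ?_, ?_, ?_⟩, ⟨?_, ?_, ?_⟩, Function.bijective_id⟩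
    · constructor
      · intro x y; ext v
        simp only [hL, LinearMap.add_apply]
        exact (hm.1 v).map_add x y
      · intro c x; ext v
        simp only [hL, LinearMap.smul_apply]
        exact (hm.1 v).map_smul c x
    · intro y; constructor
      · intro x x'; ext v
        simp only [hR, LinearMap.add_apply]
        exact (hbr.2.1 v y).map_add x x'
      · intro c x; ext v
        simp only [hR, LinearMap.smul_apply]
        exact (hbr.2.1 v y).map_smul c x
    · intro x; constructor
      · intro y y'; ext v
        simp only [hR, LinearMap.add_apply]
        exact (hbr.2.2 v x).map_add y y'
      · intro c y; ext v
        simp only [hR, LinearMap.smul_apply]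
        exact (hbr.2.2 v x).map_smul c y
    · intro x y z; ext v
      simp only [LinearMap.sub_apply, LinearMap.add_apply, Module.End.mul_apply,
        LinearMap.zero_apply, hL, hR]
      have := P1 x y v z
      rw [hpc] at this
      exact this
    · intro x y z; ext v
      simp only [LinearMap.sub_apply, LinearMap.add_apply, Module.End.mul_apply,
        LinearMap.zero_apply, hL, hR]
      have := P2 v x y z
      rw [hpc] at this
      rw [this]; abel
    · intro x y z; ext v
      simp only [LinearMap.sub_apply, Module.End.mul_apply, hL, hR, hD]
      rw [← hct x y z, (hm.1 v).map_sub, (hm.1 v).map_add]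
      exact P5 x y z v
    · intro x y z w; ext v
      simp only [LinearMap.sub_apply, LinearMap.add_apply, Module.End.mul_apply,
        LinearMap.zero_apply, hL, hR, hD]
      rw [← hct y z w, (hbr.2.2 v x).map_sub, (hbr.2.2 v x).map_add]
      have h3 := P3 v x y z w
      conv_rhs => rw [← h3]
      abel
    · intro x y z w; ext v
      simp only [LinearMap.sub_apply, LinearMap.add_apply, Module.End.mul_apply, hL, hR, hD]
      rw [← hct x y z, ← hct x y w, (hbr.2.1 v w).map_sub, (hbr.2.1 v w).map_add,
        (hbr.2.2 v z).map_sub, (hbr.2.2 v z).map_add]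
      have h4 := P4 x y v z w
      rw [← sub_eq_zero] at h4 ⊢
      conv_rhs => rw [← h4]
      abel
    · exact ⟨fun _ _ => rfl, fun _ _ => rfl⟩
    · intro u v
      show b u v = m u v - m v u
      exact (hcb u v).symm
    · intro u v w
      show t u v w = LYD K b (Llin K m hm) (Rlin K br hbr) u v w + br u v w - br v u w
      rw [hD]
      exact (hct u v w).symm
  · rintro ⟨V, instA, instM, ρ, μ, T, ⟨hρ, hμ, R1, R2, R3, R4, R5⟩, ⟨hT, rb1, rb2⟩, hbij⟩
    let E : V ≃ₗ[K] g := LinearEquiv.ofBijective (IsLinearMap.mk' T hT) hbij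
    have hE : ∀ u, E u = T u := fun u => rfl
    set e : g → V := fun x => E.symm x with he
    have hTe : ∀ x, T (e x) = x := fun x => by
      simp only [he]; rw [← hE]; exact E.apply_symm_apply x
    have heT : ∀ u, e (T u) = u := fun u => by
      simp only [he]; rw [← hE]; exact E.symm_apply_apply u
    -- element-level linearity lemmas
    have hTa : ∀ a c, T (a + c) = T a + T c := hT.map_add
    have hTs : ∀ a c, T (a - c) = T a - T c := hT.map_sub
    have hTsm : ∀ (k : K) a, T (k • a) = k • T a := fun k a => hT.map_smul k a
    have hea : ∀ a c : g, e (a + c) = e a + e c := fun a c => by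
      simp only [he]; exact map_add E.symm a c
    have hes : ∀ a c : g, e (a - c) = e a - e c := fun a c => by
      simp only [he]; exact map_sub E.symm a c
    have hesm : ∀ (k : K) (a : g), e (k • a) = k • e a := fun k a => by
      simp only [he]; exact map_smul E.symm k a
    have hρa : ∀ (c d : g) v, ρ (c + d) v = ρ c v + ρ d v := fun c d v => by
      rw [hρ.map_add]; rfl
    have hρs : ∀ (c d : g) v, ρ (c - d) v = ρ c v - ρ d v := fun c d v => by
      rw [hρ.map_sub]; rfl
    have hρsm : ∀ (k : K) (c : g) v, ρ (k • c) v = k • ρ c v := fun k c v => by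
      rw [hρ.map_smul]; rfl
    have hμ1a : ∀ (c d a : g) v, μ (c + d) a v = μ c a v + μ d a v := fun c d a v => by
      rw [(hμ.1 a).map_add]; rfl
    have hμ1s : ∀ (c d a : g) v, μ (c - d) a v = μ c a v - μ d a v := fun c d a v => by
      rw [(hμ.1 a).map_sub]; rfl
    have hμ1sm : ∀ (k : K) (c a : g) v, μ (k • c) a v = k • μ c a v := fun k c a v => by
      rw [(hμ.1 a).map_smul]; rfl
    have hμ2a : ∀ (a c d : g) v, μ a (c + d) v = μ a c v + μ a d v := fun a c d v => by
      rw [(hμ.2 a).map_add]; rfl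
    have hμ2s : ∀ (a c d : g) v, μ a (c - d) v = μ a c v - μ a d v := fun a c d v => by
      rw [(hμ.2 a).map_sub]; rfl
    have hμ2sm : ∀ (k : K) (a c : g) v, μ a (k • c) v = k • μ a c v := fun k a c v => by
      rw [(hμ.2 a).map_smul]; rfl
    -- compatibility of the binary bracket
    have hcb : ∀ x y, T (ρ x (e y)) - T (ρ y (e x)) = b x y := by
      intro x y
      have h1 := (rb1 (e x) (e y)).symm
      rw [hTe, hTe] at h1
      rw [← hTs]; exact h1
    -- preD in terms of LYD
    have hDe : ∀ x y z, preD (fun x y => T (ρ x (e y))) (fun x y z => T (μ y z (e x))) x y z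
        = T (LYD K b ρ μ x y (e z)) := by
      intro x y z
      have hbz : ρ (b x y) (e z) = ρ (T (ρ x (e y))) (e z) - ρ (T (ρ y (e x))) (e z) := by
        rw [← hcb x y, hρs]
      have hlyd : LYD K b ρ μ x y (e z)
          = μ y x (e z) - μ x y (e z) + ρ x (ρ y (e z)) - ρ y (ρ x (e z))
            - (ρ (T (ρ x (e y))) (e z) - ρ (T (ρ y (e x))) (e z)) := by
        simp only [LYD, LinearMap.sub_apply, LinearMap.add_apply, Module.End.mul_apply, hbz]
      rw [hlyd]
      simp only [preD, preAssoc, heT, hTs, hTa]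
      abel
    -- the ternary compatibility
    have hct : ∀ x y z, preD (fun x y => T (ρ x (e y))) (fun x y z => T (μ y z (e x))) x y z
        + T (μ y z (e x)) - T (μ x z (e y)) = t x y z := by
      intro x y z
      have h2 := (rb2 (e x) (e y) (e z)).symm
      rw [hTe, hTe, hTe] at h2
      rw [hDe, ← hTa, ← hTs]
      exact h2
    have hT0 : T (0 : V) = 0 := by
      have := hTs 0 0; simpa using this
    have hpc : ∀ x y, preC (fun x y => T (ρ x (e y))) x y = b x y := fun x y => hcb x y
    refine ⟨fun x y => T (ρ x (e y)), fun x y z => T (μ y z (e x)),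
      ⟨⟨?_, ?_⟩, ⟨?_, ?_, ?_⟩, ?_, ?_, ?_, ?_, ?_⟩, fun x y => hcb x y, hct⟩
    · intro y
      exact ⟨fun a c => by simp only [hρa, hTa], fun k a => by simp only [hρsm, hTsm]⟩
    · intro x
      exact ⟨fun a c => by simp only [hea, map_add, hTa], fun k a => by
        simp only [hesm, map_smul, hTsm]⟩
    · intro y z
      exact ⟨fun a c => by simp only [hea, map_add, hTa], fun k a => by
        simp only [hesm, map_smul, hTsm]⟩
    · intro x z
      exact ⟨fun a c => by simp only [hμ1a, hTa], fun k a => by simp only [hμ1sm, hTsm]⟩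
    · intro x y
      exact ⟨fun a c => by simp only [hμ2a, hTa], fun k a => by simp only [hμ2sm, hTsm]⟩
    · -- P1
      intro x y z w
      simp only [heT, hpc]
      have key := DFunLike.congr_fun (R1 x y w) (e z)
      simp only [LinearMap.sub_apply, LinearMap.add_apply, Module.End.mul_apply,
        LinearMap.zero_apply] at key
      have keyg := congrArg T key
      simp only [hTa, hTs, hT0] at keyg
      conv_rhs => rw [← keyg]
      all_goals abel
    · -- P2
      intro x y z w
      simp only [heT, hpc]
      have key := DFunLike.congr_fun (R2 y z w) (e x)
      simp only [LinearMap.sub_apply, LinearMap.add_apply, Module.End.mul_apply,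
        LinearMap.zero_apply] at key
      have keyg := congrArg T key
      simp only [hTa, hTs, hT0] at keyg
      rw [← sub_eq_zero] at keyg ⊢
      conv_rhs => rw [← keyg]
      all_goals abel
    · -- P3
      intro x y z w t'
      have key := DFunLike.congr_fun (R4 y z w t') (e x)
      simp only [LinearMap.sub_apply, LinearMap.add_apply, Module.End.mul_apply,
        LinearMap.zero_apply] at key
      rw [← hct z w t'] at key
      simp only [hDe] at key
      simp only [hμ2a, hμ2s] at key
      have keyg := congrArg T key
      simp only [hTa, hTs, hT0] at keyg
      simp only [hDe, heT]
      conv_rhs => rw [← keyg]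
      all_goals abel
    · -- P4
      intro x y z w t'
      have key := DFunLike.congr_fun (R5 x y w t') (e z)
      simp only [LinearMap.sub_apply, LinearMap.add_apply, Module.End.mul_apply,
        LinearMap.zero_apply] at key
      rw [← hct x y w, ← hct x y t'] at key
      simp only [hDe] at key
      simp only [hμ1a, hμ1s, hμ2a, hμ2s] at key
      have keyg := congrArg T key
      simp only [hTa, hTs, hT0] at keyg
      simp only [hDe, heT]
      rw [← sub_eq_zero] at keyg ⊢
      conv_rhs => rw [← keyg]
      all_goals abel
    · -- P5
      intro x y z w
      have key := DFunLike.congr_fun (R3 x y z) (e w)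
      simp only [LinearMap.sub_apply, LinearMap.add_apply, Module.End.mul_apply,
        LinearMap.zero_apply] at key
      rw [← hct x y z] at key
      simp only [hDe] at key
      simp only [hρa, hρs] at key
      have keyg := congrArg T key
      simp only [hTa, hTs, hT0] at keyg
      simp only [hDe, heT]
      rw [← sub_eq_zero] at keyg ⊢
      conv_rhs => rw [← keyg]
      all_goals abel
end

section
/- Let (g,[·,·],⟨·,·,·⟩) be a finite-dimensional Lie-Yamaguti algebra over a field K of characteristic 0, and let T: g*→g be an invertible linear map that is skew-symmetric in the sense that α(T(β))+β(T(α))=0 for all α,β in g*. Define the bilinear form ω on g by ω(x,y) := (T⁻¹(x))(y). Then ω is a symplectic structure on g if and only if T is a relative Rota-Baxter operator on g with respect to the coadjoint representation (g*;ad*,−R*τ). -/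
/-- for an invertible skew-symmetric `T : g* → g`, the form
`ω(x,y) = (T⁻¹ x)(y)` is a symplectic structure iff `T` is a relative Rota-Baxter
operator with respect to the coadjoint representation. -/
theorem statement14 (K g : Type*) [Field K] [CharZero K] [AddCommGroup g] [Module K g]
    [FiniteDimensional K g]
    (b : g → g → g) (t : g → g → g → g) (h : IsLieYamaguti K b t)
    (T : Module.Dual K g → g) (hT : IsLinearMap K T)
    (S : g → Module.Dual K g)
    (hST : Function.LeftInverse S T) (hTS : Function.RightInverse S T)
    (hskew : ∀ α β : Module.Dual K g, α (T β) + β (T α) = 0) :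
    IsSymplectic K b t (fun x y => S x y) ↔
      IsRelRB K b t
        (fun x =>
          (-(IsLinearMap.mk' (fun z => b x z) (h.1.2 x)).dualMap :
            Module.End K (Module.Dual K g)))
        (fun x y =>
          ((IsLinearMap.mk' (fun z => t z y x) (h.2.1.1 y x)).dualMap :
            Module.End K (Module.Dual K g)))
        T := by
  have hb := h.1
  have ht := h.2.1
  have hbs := h.2.2.1
  have hts := h.2.2.2.1
  have LY1 := h.2.2.2.2.1
  have hTinj : Function.Injective T := hST.injective
  have hSadd : ∀ x y, S (x + y) = S x + S y := by
    intro x y; apply hTinj; rw [hT.map_add, hTS, hTS, hTS]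
  have hSsmul : ∀ (c : K) (x : g), S (c • x) = c • S x := by
    intro c x; apply hTinj; rw [hT.map_smul, hTS, hTS]
  have hSskew : ∀ x y, S x y = - S y x := by
    intro x y
    have h1 := hskew (S x) (S y)
    rw [hTS, hTS] at h1
    linear_combination h1
  have hbneg : ∀ a c : g, b (-a) c = - b a c := by
    intro a c; have := (hb.1 c).map_neg (x := a); simpa using this
  have keyg : ∀ x y z : g,
      t z x y - t z y x + b y (b x z) - b x (b y z) + b (b x y) z = - t x y z := by
    intro x y z
    have h0 := LY1 x y z
    have e1 : b y (b x z) = b (b z x) y := by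
      rw [hbs y (b x z), hbs x z, hbneg, neg_neg]
    have e2 : b x (b y z) = - b (b y z) x := hbs _ _
    have e3 : t z y x = - t y z x := hts z y x
    rw [e1, e2, e3, ← sub_eq_zero, ← h0]
    abel
  constructor
  · rintro ⟨hωbil, hωskew, hωnd, C1, C2⟩
    refine ⟨hT, ?_, ?_⟩
    · intro u v
      have key : S (b (T u) (T v)) =
          (-(IsLinearMap.mk' (fun z => b (T u) z) (h.1.2 (T u))).dualMap :
            Module.End K (Module.Dual K g)) v -
          (-(IsLinearMap.mk' (fun z => b (T v) z) (h.1.2 (T v))).dualMap :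
            Module.End K (Module.Dual K g)) u := by
        apply LinearMap.ext; intro z
        have c1 := C1 (T u) (T v) z
        simp only [] at c1
        rw [hST u, hST v] at c1
        have e4 : v (b z (T u)) = - v (b (T u) z) := by rw [hbs z (T u), map_neg]
        have e5 : S (b (T u) (T v)) z = - S z (b (T u) (T v)) := hSskew _ _
        simp only [LinearMap.sub_apply, LinearMap.neg_apply, LinearMap.dualMap_apply,
          IsLinearMap.mk'_apply]
        linear_combination e5 - c1 + e4
      rw [← hTS (b (T u) (T v)), key]
    · intro u v w
      have key : S (t (T u) (T v) (T w)) =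
          LYD K b
            (fun x => (-(IsLinearMap.mk' (fun z => b x z) (h.1.2 x)).dualMap :
              Module.End K (Module.Dual K g)))
            (fun x y => ((IsLinearMap.mk' (fun z => t z y x) (h.2.1.1 y x)).dualMap :
              Module.End K (Module.Dual K g))) (T u) (T v) w +
          ((IsLinearMap.mk' (fun z => t z (T w) (T v)) (h.2.1.1 (T w) (T v))).dualMap :
            Module.End K (Module.Dual K g)) u -
          ((IsLinearMap.mk' (fun z => t z (T w) (T u)) (h.2.1.1 (T w) (T u))).dualMap :
            Module.End K (Module.Dual K g)) v := by
        apply LinearMap.ext; intro z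
        have c2 := C2 (T u) (T v) (T w) z
        simp only [] at c2
        rw [hST u, hST v, hST w] at c2
        have hk := congrArg w (keyg (T u) (T v) z)
        simp only [map_sub, map_add, map_neg] at hk
        have e5 : S (t (T u) (T v) (T w)) z = - S z (t (T u) (T v) (T w)) := hSskew _ _
        simp only [LYD, LinearMap.sub_apply, LinearMap.add_apply, Module.End.mul_apply,
          LinearMap.neg_apply, LinearMap.dualMap_apply, IsLinearMap.mk'_apply, neg_neg]
        linear_combination e5 - hk + c2
      rw [← hTS (t (T u) (T v) (T w)), key]
  · rintro ⟨-, RB1, RB2⟩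
    have SRB1 : ∀ x y z : g, S (b x y) z = - (S y) (b x z) + (S x) (b y z) := by
      intro x y z
      have e := RB1 (S x) (S y)
      rw [hTS x, hTS y] at e
      have e2 := congrArg S e
      rw [hST] at e2
      have e3 := LinearMap.congr_fun e2 z
      simp only [LinearMap.sub_apply, LinearMap.neg_apply, LinearMap.dualMap_apply,
        IsLinearMap.mk'_apply] at e3
      linear_combination e3
    have SRB2 : ∀ x y c z : g, S (t x y c) z =
        - (S c) (t x y z) + (S x) (t z c y) - (S y) (t z c x) := by
      intro x y c z
      have e := RB2 (S x) (S y) (S c)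
      rw [hTS x, hTS y, hTS c] at e
      have e2 := congrArg S e
      rw [hST] at e2
      have e3 := LinearMap.congr_fun e2 z
      have hk := congrArg (S c) (keyg x y z)
      simp only [map_sub, map_add, map_neg] at hk
      simp only [LYD, LinearMap.sub_apply, LinearMap.add_apply, Module.End.mul_apply,
        LinearMap.neg_apply, LinearMap.dualMap_apply, IsLinearMap.mk'_apply, neg_neg] at e3
      linear_combination e3 + hk
    refine ⟨⟨fun y => ⟨fun a a' => by simp [hSadd], fun c a => by simp [hSsmul]⟩,
      fun x => ⟨fun a a' => (S x).map_add a a', fun c a => (S x).map_smul c a⟩⟩,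
      fun x y => hSskew x y, ?_, ?_, ?_⟩
    · intro x hx
      have hx0 : S x = 0 := LinearMap.ext hx
      rw [← hTS x, hx0, hT.map_zero]
    · intro x y z
      have e1 := SRB1 x y z
      have e2 : S z (b x y) = - S (b x y) z := hSskew _ _
      have e3 : S y (b z x) = - S y (b x z) := by rw [hbs z x, map_neg]
      simp only []
      linear_combination e2 + e3 - e1
    · intro x y z w
      have e1 := SRB2 x y z w
      have e2 : S w (t x y z) = - S (t x y z) w := hSskew _ _
      simp only []
      linear_combination e1 - e2
end
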